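/- arXiv:math/0211298 — 5 statements merged into one kernel-verified Lean document; each statement's English description precedes it below -/
import Mathlib

section
/- Let X be a Banach space with dim X = κ and let D be an ultrafilter on a set I. The canonical embedding d_X : X → (X)_D is surjective (maps X onto the ultrapower (X)_D) if and only if D is κ⁺-complete, where κ⁺ is the successor cardinal of κ. -/
open Filter Topology
open scoped ENNReal

noncomputable section

universe u

/-- The subspace `N_D ⊆ ℓ∞(I, X)` of families whose norms tend to `0` along the
ultrafilter `D`. -/
def ultraNullIdeal (I : Type u) (D : Ultrafilter I) (X : Type u)
    [NormedAddCommGroup X] [NormedSpace ℝ X] :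
    Submodule ℝ (lp (fun _ : I => X) ∞) where
  carrier := {f | Filter.Tendsto (fun i => ‖f i‖) (D : Filter I) (nhds 0)}
  zero_mem' := by
    simpa using (tendsto_const_nhds :
      Filter.Tendsto (fun _ : I => (0 : ℝ)) (D : Filter I) (nhds 0))
  add_mem' := by
    intro f g hf hg
    have h := hf.add hg
    rw [add_zero] at h
    refine squeeze_zero (fun i => norm_nonneg _) (fun i => ?_) h
    simpa using norm_add_le (f i) (g i)
  smul_mem' := by
    intro c f hf
    have h : Filter.Tendsto (fun i => ‖c‖ * ‖f i‖) (D : Filter I) (nhds 0) := by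
      simpa using hf.const_mul ‖c‖
    refine squeeze_zero (fun i => norm_nonneg _) (fun i => ?_) h
    simp [norm_smul]

/-- The Banach-space ultrapower `(X)_D = ℓ∞(I,X) / N_D`, with the quotient norm. -/
abbrev Ultrapower (I : Type u) (D : Ultrafilter I) (X : Type u)
    [NormedAddCommGroup X] [NormedSpace ℝ X] : Type u :=
  lp (fun _ : I => X) ∞ ⧸ ultraNullIdeal I D X

/-- The bounded family constantly equal to `x`, as an element of `ℓ∞(I, X)`. -/
def constLp (I : Type u) (X : Type u) [NormedAddCommGroup X] [NormedSpace ℝ X] (x : X) :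
    lp (fun _ : I => X) ∞ :=
  ⟨fun _ => x, memℓp_infty ⟨‖x‖, by rintro r ⟨i, rfl⟩; exact le_rfl⟩⟩

/-- The canonical (diagonal) embedding `d_X : X → (X)_D`. -/
def diagEmbedding (I : Type u) (D : Ultrafilter I) (X : Type u)
    [NormedAddCommGroup X] [NormedSpace ℝ X] (x : X) : Ultrapower I D X :=
  Submodule.Quotient.mk (constLp I X x)

/-- The dimension of a normed space: the least cardinality of a subset whose closed linear
span is the whole space (for infinite-dimensional spaces this is the density character). -/
noncomputable def bdim (X : Type u) [SeminormedAddCommGroup X] [NormedSpace ℝ X] :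
    Cardinal.{u} :=
  sInf {c : Cardinal.{u} |
    ∃ A : Set X, Cardinal.mk A = c ∧ (Submodule.span ℝ A).topologicalClosure = ⊤}

/-- An ultrafilter `D` is `μ`-complete if the intersection of any family of fewer than `μ`
members of `D` again belongs to `D`. -/
def UltrafilterComplete {I : Type u} (D : Ultrafilter I) (μ : Cardinal.{u}) : Prop :=
  ∀ G : Set (Set I), (∀ g ∈ G, g ∈ D) → Cardinal.mk G < μ → ⋂₀ G ∈ D

section Helpers

variable {I : Type u} {D : Ultrafilter I} {X : Type u}
  [NormedAddCommGroup X] [NormedSpace ℝ X]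

lemma mem_ultraNullIdeal_iff {f : lp (fun _ : I => X) ∞} :
    f ∈ ultraNullIdeal I D X ↔
      Filter.Tendsto (fun i => ‖f i‖) (D : Filter I) (nhds 0) := Iff.rfl

lemma diag_surj_iff :
    Function.Surjective (diagEmbedding I D X) ↔
      ∀ f : lp (fun _ : I => X) ∞, ∃ x : X,
        Filter.Tendsto (fun i => ‖x - f i‖) (D : Filter I) (nhds 0) := by
  have key : ∀ (x : X) (f : lp (fun _ : I => X) ∞),
      (fun i => ‖(constLp I X x - f) i‖) = fun i => ‖x - f i‖ := by
    intro x f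
    funext i
    rw [lp.coeFn_sub, Pi.sub_apply]
    rfl
  constructor
  · intro h f
    obtain ⟨x, hx⟩ := h (Submodule.Quotient.mk f)
    refine ⟨x, ?_⟩
    have h2 : constLp I X x - f ∈ ultraNullIdeal I D X :=
      (Submodule.Quotient.eq _).mp hx
    rw [mem_ultraNullIdeal_iff, key] at h2
    exact h2
  · intro h y
    obtain ⟨f, rfl⟩ := Submodule.Quotient.mk_surjective _ y
    obtain ⟨x, hx⟩ := h f
    refine ⟨x, (Submodule.Quotient.eq _).mpr ?_⟩
    rw [mem_ultraNullIdeal_iff, key]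
    exact hx

lemma bdim_spec (X : Type u) [NormedAddCommGroup X] [NormedSpace ℝ X] :
    ∃ A : Set X, Cardinal.mk A = bdim X ∧
      (Submodule.span ℝ A).topologicalClosure = ⊤ := by
  have hne : {c : Cardinal.{u} | ∃ A : Set X, Cardinal.mk A = c ∧
      (Submodule.span ℝ A).topologicalClosure = ⊤}.Nonempty := by
    refine ⟨Cardinal.mk (Set.univ : Set X), Set.univ, rfl, ?_⟩
    rw [Submodule.span_univ]
    exact top_le_iff.mp (Submodule.le_topologicalClosure ⊤)
  obtain ⟨A, hA, htop⟩ := csInf_mem hne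
  exact ⟨A, hA, htop⟩

lemma bdim_le (A : Set X) (h : (Submodule.span ℝ A).topologicalClosure = ⊤) :
    bdim X ≤ Cardinal.mk A :=
  csInf_le (OrderBot.bddBelow _) ⟨A, rfl, h⟩

lemma exists_mem_of_cover {κ : Cardinal.{u}}
    (hD : UltrafilterComplete D (Order.succ κ))
    (T : Set (Set I)) (hT : Cardinal.mk T ≤ κ) (hcov : ∀ i : I, ∃ t ∈ T, i ∈ t) :
    ∃ t ∈ T, t ∈ D := by
  by_contra hcon
  push_neg at hcon
  have hG : ∀ g ∈ compl '' T, g ∈ D := by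
    rintro g ⟨t, ht, rfl⟩
    exact (Ultrafilter.compl_mem_iff_notMem).mpr (hcon t ht)
  have hcard : Cardinal.mk (compl '' T) < Order.succ κ :=
    (Cardinal.mk_image_le.trans hT).trans_lt (Order.lt_succ κ)
  have hmem := hD _ hG hcard
  have hempty : ⋂₀ (compl '' T) = ∅ := by
    ext i
    simp only [Set.mem_sInter, Set.mem_empty_iff_false, iff_false, not_forall]
    obtain ⟨t, ht, hit⟩ := hcov i
    exact ⟨tᶜ, Set.mem_image_of_mem _ ht, fun h => h hit⟩
  rw [hempty] at hmem
  exact (Filter.empty_notMem (D : Filter I)) hmem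

lemma exists_small_dense (h : Cardinal.aleph0 ≤ bdim X) :
    ∃ S : Set X, Cardinal.mk S ≤ bdim X ∧
      ∀ x : X, ∀ ε : ℝ, 0 < ε → ∃ s ∈ S, ‖x - s‖ < ε := by
  obtain ⟨A, hA, htop⟩ := bdim_spec X
  haveI : Infinite ↥A := Cardinal.infinite_iff.mpr (by rw [hA]; exact h)
  let F : (↥A →₀ ℚ) →+ X := Finsupp.liftAddHom fun a =>
    { toFun := fun q : ℚ => (q : ℝ) • (a : X)
      map_zero' := by simp
      map_add' := fun p q => by push_cast; rw [add_smul] }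
  have hFsingle : ∀ (a : ↥A) (q : ℚ), F (Finsupp.single a q) = (q : ℝ) • (a : X) :=
    fun a q => Finsupp.liftAddHom_apply_single _ _ _
  refine ⟨Set.range F, ?_, ?_⟩
  · calc Cardinal.mk (Set.range F) ≤ Cardinal.mk (↥A →₀ ℚ) := Cardinal.mk_range_le
      _ = max (Cardinal.lift.{0} (Cardinal.mk ↥A)) (Cardinal.lift.{u} (Cardinal.mk ℚ)) :=
        Cardinal.mk_finsupp_lift_of_infinite _ _
      _ = max (bdim X) Cardinal.aleph0 := by
        rw [Cardinal.lift_uzero, hA, Cardinal.mkRat, Cardinal.lift_aleph0]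
      _ = bdim X := max_eq_left h
  · intro x ε hε
    have hx : x ∈ closure ((Submodule.span ℝ A : Submodule ℝ X) : Set X) := by
      have hx1 : x ∈ (Submodule.span ℝ A).topologicalClosure := htop ▸ Submodule.mem_top
      exact hx1
    obtain ⟨y, hy, hyx⟩ := Metric.mem_closure_iff.mp hx (ε / 2) (by positivity)
    rw [dist_eq_norm] at hyx
    obtain ⟨n, c, g, rfl⟩ := Submodule.mem_span_set'.mp hy
    have hchoice : ∀ i : Fin n, ∃ q : ℚ,
        |c i - (q : ℝ)| < ε / (2 * (n + 1) * (‖(g i : X)‖ + 1)) := fun i =>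
      exists_rat_near _ (by positivity)
    choose q hq using hchoice
    set v : ↥A →₀ ℚ := ∑ i, Finsupp.single (g i) (q i) with hv
    refine ⟨F v, Set.mem_range_self _, ?_⟩
    have hFv : F v = ∑ i, (q i : ℝ) • (g i : X) := by
      rw [hv, map_sum]
      exact Finset.sum_congr rfl fun i _ => hFsingle _ _
    have hterm : ∀ i : Fin n, ‖c i • (g i : X) - (q i : ℝ) • (g i : X)‖ ≤ ε / (2 * (n + 1)) := by
      intro i
      rw [← sub_smul, norm_smul]
      have h1 : ‖c i - (q i : ℝ)‖ ≤ ε / (2 * (n + 1) * (‖(g i : X)‖ + 1)) :=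
        le_of_lt (by simpa [Real.norm_eq_abs] using hq i)
      calc ‖c i - (q i : ℝ)‖ * ‖(g i : X)‖
          ≤ ε / (2 * (n + 1) * (‖(g i : X)‖ + 1)) * (‖(g i : X)‖ + 1) := by
            apply mul_le_mul h1 (by linarith [norm_nonneg (g i : X)])
              (norm_nonneg _) (by positivity)
        _ = ε / (2 * (n + 1)) := by
            field_simp
    have hsum : ‖(∑ i, c i • (g i : X)) - F v‖ ≤ ε / 2 := by
      rw [hFv, ← Finset.sum_sub_distrib]
      calc ‖∑ i, (c i • (g i : X) - (q i : ℝ) • (g i : X))‖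
          ≤ ∑ i : Fin n, ε / (2 * (n + 1)) :=
            (norm_sum_le _ _).trans (Finset.sum_le_sum fun i _ => hterm i)
        _ = n * (ε / (2 * (n + 1))) := by simp [Finset.sum_const, mul_comm]
        _ ≤ ε / 2 := by
            have h2 : (n : ℝ) * (ε / (2 * (n + 1))) = ε / 2 * ((n : ℝ) / (n + 1)) := by
              field_simp
            rw [h2]
            calc ε / 2 * ((n : ℝ) / (n + 1)) ≤ ε / 2 * 1 := by
                  apply mul_le_mul_of_nonneg_left _ (by positivity)
                  rw [div_le_one (by positivity)]
                  linarith
              _ = ε / 2 := mul_one _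
    calc ‖x - F v‖ ≤ ‖x - ∑ i, c i • (g i : X)‖ + ‖(∑ i, c i • (g i : X)) - F v‖ := by
          simpa using norm_sub_le_norm_sub_add_norm_sub x (∑ i, c i • (g i : X)) (F v)
      _ < ε / 2 + ε / 2 := by
          apply add_lt_add_of_lt_of_le hyx hsum
      _ = ε := by ring

lemma finiteDimensional_of_bdim_lt (h : bdim X < Cardinal.aleph0)
    (A : Set X) (hA : Cardinal.mk A = bdim X)
    (htop : (Submodule.span ℝ A).topologicalClosure = ⊤) : FiniteDimensional ℝ X := by
  have hfin : A.Finite := Cardinal.lt_aleph0_iff_set_finite.mp (hA ▸ h)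
  haveI := FiniteDimensional.span_of_finite ℝ hfin
  have hclosed : IsClosed ((Submodule.span ℝ A : Submodule ℝ X) : Set X) :=
    Submodule.closed_of_finiteDimensional _
  have hspan : Submodule.span ℝ A = ⊤ := by
    rw [← hclosed.submodule_topologicalClosure_eq]
    exact htop
  exact ⟨by rw [← hspan]; exact Submodule.fg_span hfin⟩

lemma exists_separated (X : Type u) [NormedAddCommGroup X] [NormedSpace ℝ X] :
    ∃ S : Set X, (∀ x ∈ S, ‖x‖ ≤ 1) ∧
      (S.Pairwise fun a b => (1 : ℝ) / 2 ≤ ‖a - b‖) ∧ bdim X ≤ Cardinal.mk S := by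
  set 𝒞 : Set (Set X) :=
    {S | (∀ x ∈ S, ‖x‖ ≤ 1) ∧ S.Pairwise fun a b => (1 : ℝ) / 2 ≤ ‖a - b‖} with h𝒞
  have hzorn : ∀ c ⊆ 𝒞, IsChain (· ⊆ ·) c → ∃ ub ∈ 𝒞, ∀ s ∈ c, s ⊆ ub := by
    intro c hc hchain
    refine ⟨⋃₀ c, ⟨?_, ?_⟩, fun s hs => Set.subset_sUnion_of_mem hs⟩
    · rintro x ⟨s, hs, hxs⟩
      exact (hc hs).1 x hxs
    · rintro a ⟨s, hs, has⟩ b ⟨t, ht, hbt⟩ hab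
      rcases hchain.total hs ht with hst | hts
      · exact (hc ht).2 (hst has) hbt hab
      · exact (hc hs).2 has (hts hbt) hab
  obtain ⟨M, hM⟩ := zorn_subset 𝒞 hzorn
  refine ⟨M, hM.prop.1, hM.prop.2, ?_⟩
  by_contra hlt
  push_neg at hlt
  have hne : (Submodule.span ℝ M).topologicalClosure ≠ ⊤ := fun h =>
    absurd (bdim_le M h) (not_le.mpr hlt)
  have hex : ∃ x : X, x ∉ (Submodule.span ℝ M).topologicalClosure := by
    by_contra hcon
    push_neg at hcon
    exact hne (Submodule.eq_top_iff'.mpr hcon)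
  obtain ⟨x₀, hx₀, hriesz⟩ :=
    riesz_lemma (Submodule.isClosed_topologicalClosure _) hex
      (show (3 : ℝ) / 4 < 1 by norm_num)
  have hx₀ne : x₀ ≠ 0 := fun h =>
    hx₀ (h ▸ Submodule.zero_mem _)
  have hx₀pos : 0 < ‖x₀‖ := norm_pos_iff.mpr hx₀ne
  set uvec : X := ‖x₀‖⁻¹ • x₀ with hu
  have hunorm : ‖uvec‖ = 1 := by
    rw [hu, norm_smul, norm_inv, norm_norm, inv_mul_cancel₀ (ne_of_gt hx₀pos)]
  have hsep : ∀ y ∈ (Submodule.span ℝ M).topologicalClosure, (3 : ℝ) / 4 ≤ ‖uvec - y‖ := by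
    intro y hy
    have h1 := hriesz (‖x₀‖ • y) (Submodule.smul_mem _ _ hy)
    have h2 : x₀ - ‖x₀‖ • y = ‖x₀‖ • (uvec - y) := by
      rw [smul_sub, hu, smul_smul, mul_inv_cancel₀ (ne_of_gt hx₀pos), one_smul]
    rw [h2, norm_smul, norm_norm] at h1
    rw [mul_comm (3/4 : ℝ) ‖x₀‖] at h1
    exact le_of_mul_le_mul_left h1 hx₀pos
  have hMF : M ⊆ ((Submodule.span ℝ M).topologicalClosure : Set X) := fun m hm =>
    Submodule.le_topologicalClosure _ (Submodule.subset_span hm)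
  have huM : uvec ∉ M := by
    intro hmem
    have := hsep uvec (hMF hmem)
    rw [sub_self, norm_zero] at this
    linarith
  have hins : insert uvec M ∈ 𝒞 := by
    constructor
    · intro x hx
      rcases hx with rfl | hx
      · exact le_of_eq hunorm
      · exact hM.prop.1 x hx
    · apply hM.prop.2.insert
      intro b hb _
      have h34 : (3 : ℝ) / 4 ≤ ‖uvec - b‖ := hsep b (hMF hb)
      constructor
      · linarith
      · rw [norm_sub_rev] at h34; linarith
  have : insert uvec M ⊆ M := hM.2 hins (Set.subset_insert _ _)
  exact huM (this (Set.mem_insert _ _))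


end Helpers

/-- For a Banach space `X` with `dim X = κ` and an ultrafilter `D` on `I`,
the canonical embedding `d_X : X → (X)_D` is onto iff `D` is `κ⁺`-complete. -/
theorem diagEmbedding_surjective_iff_succ_complete
    (I : Type u) (D : Ultrafilter I)
    (X : Type u) [NormedAddCommGroup X] [NormedSpace ℝ X] [CompleteSpace X]
    (κ : Cardinal.{u}) (hκ : bdim X = κ) :
    Function.Surjective (diagEmbedding I D X) ↔ UltrafilterComplete D (Order.succ κ) := by
  subst hκ
  rw [diag_surj_iff]
  constructor
  · -- surjective implies complete
    intro hsurj G hG hGcard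
    by_contra hGinter
    have hGfin : ¬ G.Finite := by
      intro hfin
      exact hGinter ((Filter.sInter_mem hfin).mpr fun g hg => hG g hg)
    haveI : Infinite ↥G := Set.infinite_coe_iff.mpr hGfin
    have hGle : Cardinal.mk ↥G ≤ bdim X := Order.lt_succ_iff.mp hGcard
    have hinf : Cardinal.aleph0 ≤ bdim X :=
      le_trans (Cardinal.infinite_iff.mp inferInstance) hGle
    obtain ⟨S', hS'ball, hS'sep, hS'card⟩ := exists_separated X
    have hopt : Cardinal.mk (Option ↥G) ≤ Cardinal.mk ↥S' := by
      rw [Cardinal.mk_option]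
      calc Cardinal.mk ↥G + 1 ≤ bdim X + bdim X :=
            add_le_add hGle (le_trans (by exact_mod_cast Cardinal.one_le_aleph0) hinf)
        _ = bdim X := Cardinal.add_eq_self hinf
        _ ≤ Cardinal.mk ↥S' := hS'card
    obtain ⟨e⟩ := (Cardinal.le_def _ _).mp hopt
    classical
    have hexg : ∀ i : I, i ∉ ⋂₀ G → ∃ g : ↥G, i ∉ (g : Set I) := by
      intro i hi
      rw [Set.mem_sInter] at hi
      push_neg at hi
      obtain ⟨g, hg, hig⟩ := hi
      exact ⟨⟨g, hg⟩, hig⟩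
    set h : I → Option ↥G := fun i =>
      if hi : i ∈ ⋂₀ G then none else some (hexg i hi).choose with hdef
    have hsome : ∀ i (g : ↥G), h i = some g → i ∉ (g : Set I) := by
      intro i g hg
      rw [hdef] at hg
      simp only at hg
      split at hg
      · exact absurd hg (by simp)
      · next hi =>
          obtain ⟨rfl⟩ := Option.some_injective _ hg
          exact (hexg i hi).choose_spec
    have hnone : ∀ i, h i = none → i ∈ ⋂₀ G := by
      intro i hg
      rw [hdef] at hg
      simp only at hg
      split at hg
      · next hi => exact hi
      · exact absurd hg (by simp)
    have hmem : Memℓp (fun i : I => ((e (h i) : X))) ∞ := by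
      apply memℓp_infty
      refine ⟨1, ?_⟩
      rintro r ⟨i, rfl⟩
      exact hS'ball _ (e (h i)).2
    obtain ⟨x, hx⟩ := hsurj ⟨_, hmem⟩
    have hA : {i : I | ‖x - (e (h i) : X)‖ < 1/4} ∈ D := by
      have := (NormedAddCommGroup.tendsto_nhds_zero.mp hx) (1/4) (by norm_num)
      have h2 : ∀ i : I, ‖x - ((⟨_, hmem⟩ : lp (fun _ : I => X) ∞) : ∀ _ : I, X) i‖
          = ‖x - (e (h i) : X)‖ := fun i => rfl
      refine Filter.mem_of_superset this ?_
      intro i hi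
      simp only [Set.mem_setOf_eq] at hi ⊢
      rw [norm_norm] at hi
      exact hi
    obtain ⟨i₀, hi₀⟩ := Filter.nonempty_of_mem hA
    have hsub : {i : I | ‖x - (e (h i) : X)‖ < 1/4} ⊆ h ⁻¹' {h i₀} := by
      intro i hi
      simp only [Set.mem_preimage, Set.mem_singleton_iff]
      by_contra hne
      have hxne : e (h i) ≠ e (h i₀) := fun hh => hne (e.injective hh)
      have hcne : (e (h i) : X) ≠ (e (h i₀) : X) := fun hh => hxne (Subtype.ext hh)
      have hsep := hS'sep (e (h i)).2 (e (h i₀)).2 hcne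
      have : ‖(e (h i) : X) - (e (h i₀) : X)‖ < 1/2 := by
        calc ‖(e (h i) : X) - (e (h i₀) : X)‖
            ≤ ‖x - (e (h i) : X)‖ + ‖x - (e (h i₀) : X)‖ := by
              rw [norm_sub_rev x (e (h i) : X)]
              simpa using norm_sub_le_norm_sub_add_norm_sub _ x _
        _ < 1/4 + 1/4 := add_lt_add hi hi₀
        _ = 1/2 := by norm_num
      linarith
    have hP : h ⁻¹' {h i₀} ∈ D := Filter.mem_of_superset hA hsub
    cases hcase : h i₀ with
    | none =>
        apply hGinter
        refine Filter.mem_of_superset hP ?_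
        intro i hi
        simp only [Set.mem_preimage, Set.mem_singleton_iff, hcase] at hi
        exact hnone i hi
    | some g =>
        have hgc : (g : Set I)ᶜ ∈ D := by
          refine Filter.mem_of_superset hP ?_
          intro i hi
          simp only [Set.mem_preimage, Set.mem_singleton_iff, hcase] at hi
          exact hsome i g hi
        exact (Ultrafilter.compl_mem_iff_notMem.mp hgc) (hG g g.2)
  · -- complete implies surjective
    intro hcomp f
    rcases lt_or_ge (bdim X) Cardinal.aleph0 with hfin | hinf
    · obtain ⟨A, hA, htop⟩ := bdim_spec X
      haveI := finiteDimensional_of_bdim_lt hfin A hA htop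
      obtain ⟨C, hC⟩ := memℓp_infty_iff.mp (lp.memℓp f)
      have hball : ∀ i : I, f i ∈ Metric.closedBall (0 : X) C := by
        intro i
        rw [Metric.mem_closedBall, dist_zero_right]
        exact hC ⟨i, rfl⟩
      have hle : ↑(Ultrafilter.map (⇑f) D) ≤ Filter.principal (Metric.closedBall (0 : X) C) := by
        rw [Ultrafilter.coe_map, Filter.le_principal_iff, Filter.mem_map]
        exact Filter.univ_mem' hball
      obtain ⟨x, -, hx⟩ := (isCompact_closedBall (0 : X) C).ultrafilter_le_nhds
        (Ultrafilter.map (⇑f) D) hle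
      have hten : Filter.Tendsto (⇑f) (D : Filter I) (nhds x) := hx
      refine ⟨x, ?_⟩
      have := (tendsto_const_nhds (x := x) (f := (D : Filter I))).sub hten
      have hnorm := this.norm
      rw [sub_self, norm_zero] at hnorm
      exact hnorm
    · obtain ⟨S, hScard, hSdense⟩ := exists_small_dense hinf
      have hpick : ∀ n : ℕ, ∃ s : X, {i : I | ‖f i - s‖ < 1/(n+1)} ∈ D := by
        intro n
        have hpos : (0 : ℝ) < 1/(n+1) := by positivity
        obtain ⟨t, ht, htD⟩ := exists_mem_of_cover (κ := bdim X) hcomp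
          ((fun s : X => {i : I | ‖f i - s‖ < 1/(n+1)}) '' S)
          (le_trans Cardinal.mk_image_le hScard)
          (by
            intro i
            obtain ⟨s, hs, hdist⟩ := hSdense (f i) (1/(n+1)) hpos
            exact ⟨_, Set.mem_image_of_mem _ hs, hdist⟩)
        obtain ⟨s, -, rfl⟩ := ht
        exact ⟨s, htD⟩
      choose s hs using hpick
      have hdist : ∀ n m : ℕ, dist (s n) (s m) ≤ 1/(n+1) + 1/(m+1) := by
        intro n m
        obtain ⟨i, hin, him⟩ := Filter.nonempty_of_mem (Filter.inter_mem (hs n) (hs m))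
        simp only [Set.mem_setOf_eq] at hin him
        calc dist (s n) (s m) ≤ dist (s n) (f i) + dist (f i) (s m) := dist_triangle _ _ _
          _ ≤ 1/(n+1) + 1/(m+1) := by
              rw [dist_eq_norm, dist_eq_norm, norm_sub_rev]
              exact add_le_add (le_of_lt hin) (le_of_lt him)
      have hcauchy : CauchySeq s := by
        apply cauchySeq_of_le_tendsto_0 (b := fun N : ℕ => 2/(N+1))
        · intro n m N hn hm
          have hb1 : (1:ℝ)/(n+1) ≤ 1/(N+1) := by
            apply one_div_le_one_div_of_le (by positivity)
            exact add_le_add_left (by exact_mod_cast hn) 1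
          have hb2 : (1:ℝ)/(m+1) ≤ 1/(N+1) := by
            apply one_div_le_one_div_of_le (by positivity)
            exact add_le_add_left (by exact_mod_cast hm) 1
          calc dist (s n) (s m) ≤ 1/(n+1) + 1/(m+1) := hdist n m
            _ ≤ 1/(N+1) + 1/(N+1) := add_le_add hb1 hb2
            _ = 2/(N+1) := by ring
        · have := tendsto_one_div_add_atTop_nhds_zero_nat.const_mul (2:ℝ)
          simp only [mul_zero] at this
          convert this using 2 with n
          ring
      obtain ⟨x, hlim⟩ := cauchySeq_tendsto_of_complete hcauchy
      have hsx : ∀ n : ℕ, dist (s n) x ≤ 2/(n+1) := by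
        intro n
        have h1 : Filter.Tendsto (fun m => dist (s n) (s m)) atTop (nhds (dist (s n) x)) :=
          Filter.Tendsto.dist tendsto_const_nhds hlim
        apply le_of_tendsto h1
        filter_upwards [Filter.eventually_ge_atTop n] with m hm
        calc dist (s n) (s m) ≤ 1/(n+1) + 1/(m+1) := hdist n m
          _ ≤ 1/(n+1) + 1/(n+1) := by
              apply add_le_add le_rfl
              apply one_div_le_one_div_of_le (by positivity)
              exact add_le_add_left (by exact_mod_cast hm) 1
          _ = 2/(n+1) := by ring
      refine ⟨x, ?_⟩
      rw [NormedAddCommGroup.tendsto_nhds_zero]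
      intro ε hε
      obtain ⟨n, hn⟩ := exists_nat_gt (3/ε)
      have hεn : 3/((n:ℝ)+1) < ε := by
        rw [div_lt_iff₀ hε] at hn
        rw [div_lt_iff₀ (by positivity)]
        nlinarith
      have : {i : I | ‖f i - s n‖ < 1/(n+1)} ∈ (D : Filter I) := hs n
      filter_upwards [this] with i hi
      rw [norm_norm]
      calc ‖x - f i‖ ≤ ‖x - s n‖ + ‖s n - f i‖ := by
            simpa using norm_sub_le_norm_sub_add_norm_sub x (s n) (f i)
        _ ≤ 2/(n+1) + 1/(n+1) := by
            apply add_le_add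
            · rw [← dist_eq_norm, dist_comm]; exact hsx n
            · rw [norm_sub_rev]; exact le_of_lt hi
        _ = 3/((n:ℝ)+1) := by ring
        _ < ε := hεn
end
end

section
/- If X is an infinite-dimensional Banach space and D is a countably incomplete ultrafilter on a set I, then the canonical embedding d_X : X → (X)_D is not surjective, i.e., (X)_D \ d_X(X) ≠ ∅. -/
open Filter Topology
open scoped ENNReal

noncomputable section

universe u

/-- If `X` is an infinite-dimensional Banach space and `D` is a countably
incomplete (not `ω₁`-complete) ultrafilter, then the canonical embedding `d_X : X → (X)_D`
is not surjective. -/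
theorem diagEmbedding_not_surjective_of_countably_incomplete
    (I : Type u) (D : Ultrafilter I)
    (X : Type u) [NormedAddCommGroup X] [NormedSpace ℝ X] [CompleteSpace X]
    (hinf : ¬ FiniteDimensional ℝ X)
    (hD : ¬ UltrafilterComplete D (Cardinal.aleph 1)) :
    ¬ Function.Surjective (diagEmbedding I D X) := by
  classical
  intro hsurj
  -- Extract a countable family in `D` with small intersection
  unfold UltrafilterComplete at hD
  push_neg at hD
  obtain ⟨G, hGD, hGcard, hJ⟩ := hD
  have hGne : G.Nonempty := by
    rcases G.eq_empty_or_nonempty with h | h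
    · exfalso; apply hJ; rw [h, Set.sInter_empty]; exact Filter.univ_mem
    · exact h
  have hGcount : G.Countable := (Cardinal.countable_iff_lt_aleph_one G).2 hGcard
  obtain ⟨e, he⟩ := hGcount.exists_eq_range hGne
  have hJc : (⋂₀ G)ᶜ ∈ D := (Ultrafilter.compl_mem_iff_notMem).2 hJ
  -- the decreasing family with empty intersection
  set A : ℕ → Set I := fun n => (⋂₀ G)ᶜ ∩ ⋂ k ∈ Finset.range (n + 1), e k with hAdef
  have hA : ∀ n, A n ∈ (D : Filter I) := by
    intro n
    refine Filter.inter_mem hJc ?_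
    refine (Filter.biInter_finset_mem _).2 fun k _ => ?_
    exact hGD (e k) (he ▸ ⟨k, rfl⟩)
  have hexists : ∀ i, ∃ n, i ∉ A n := by
    intro i
    by_cases hi : i ∈ ⋂₀ G
    · exact ⟨0, fun h => h.1 hi⟩
    · rw [he] at hi
      simp only [Set.mem_sInter, Set.mem_range, not_forall] at hi
      obtain ⟨g, ⟨k, rfl⟩, hgk⟩ := hi
      refine ⟨k, fun h => hgk ?_⟩
      have := h.2
      simp only [Set.mem_iInter] at this
      exact this k (Finset.self_mem_range_succ k)
  set nfun : I → ℕ := fun i => Nat.find (hexists i) with hnfun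
  -- a 1-separated bounded sequence
  obtain ⟨R, y, hR1, hyR, hysep⟩ := exists_seq_norm_le_one_le_norm_sub (𝕜 := ℝ) (E := X) hinf
  set f : lp (fun _ : I => X) ∞ :=
    ⟨fun i => y (nfun i), memℓp_infty ⟨R, by rintro r ⟨i, rfl⟩; exact hyR _⟩⟩ with hf
  obtain ⟨x, hx⟩ := hsurj (Submodule.Quotient.mk f)
  rw [diagEmbedding, Submodule.Quotient.eq] at hx
  have htend : Filter.Tendsto (fun i => ‖x - y (nfun i)‖) (D : Filter I) (nhds 0) := by
    have h0 : Filter.Tendsto (fun i => ‖(constLp I X x - f) i‖) (D : Filter I) (nhds 0) := hx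
    have heq : ∀ i, (constLp I X x - f) i = x - y (nfun i) := by
      intro i; rw [lp.coeFn_sub]; rfl
    simpa only [heq] using h0
  have hS : ∀ᶠ i in (D : Filter I), ‖x - y (nfun i)‖ < 1 / 2 :=
    htend.eventually_lt_const (by norm_num)
  obtain ⟨i₀, hi₀⟩ := hS.exists
  have hT : ∀ᶠ i in (D : Filter I), nfun i = nfun i₀ := by
    filter_upwards [hS] with i hi
    by_contra hne
    have h1 : (1 : ℝ) ≤ ‖y (nfun i₀) - y (nfun i)‖ := hysep (Ne.symm hne)
    have h2 : ‖y (nfun i₀) - y (nfun i)‖ ≤ ‖x - y (nfun i₀)‖ + ‖x - y (nfun i)‖ := by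
      have := norm_sub_le (x - y (nfun i₀)) (x - y (nfun i))
      simpa [sub_sub_sub_cancel_left, norm_sub_rev] using this
    linarith
  have hAev : ∀ᶠ i in (D : Filter I), i ∈ A (nfun i₀) := by
    rw [Filter.eventually_iff]
    simpa using hA (nfun i₀)
  obtain ⟨j, hj1, hj2⟩ := (hT.and hAev).exists
  have hns : j ∉ A (nfun j) := Nat.find_spec (hexists j)
  rw [hj1] at hns
  exact hns hj2
end
end

section
/- If X is a finite-dimensional Banach space and Y is a Banach space with X ≡ Y, then Y is isometrically isomorphic to X; that is, the elementary-equivalence class of a finite-dimensional Banach space contains exactly one member up to isometry. -/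
open Filter Topology
open scoped ENNReal

noncomputable section

universe u

/-- Banach spaces `X` and `Y` are *elementary equivalent* if some ultrapowers `(X)_G` and
`(Y)_G` are isometrically isomorphic. -/
def ElemEquiv (X Y : Type u) [NormedAddCommGroup X] [NormedSpace ℝ X]
    [NormedAddCommGroup Y] [NormedSpace ℝ Y] : Prop :=
  ∃ (K : Type u) (G : Ultrafilter K),
    Nonempty (Ultrapower K G X ≃ₗᵢ[ℝ] Ultrapower K G Y)

-- auxiliary material

section Aux

variable {I : Type u} (D : Ultrafilter I) {X : Type u}
  [NormedAddCommGroup X] [NormedSpace ℝ X]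

@[simp] lemma constLp_apply (x : X) (i : I) : constLp I X x i = x := rfl

lemma norm_constLp [Nonempty I] (x : X) : ‖constLp I X x‖ = ‖x‖ := by
  refine le_antisymm (lp.norm_le_of_forall_le (norm_nonneg x) fun i => le_rfl) ?_
  simpa using lp.norm_apply_le_norm ENNReal.top_ne_zero (constLp I X x) (Classical.arbitrary I)

/-- The diagonal embedding as a linear isometry. -/
def diagLinearIsometry (I : Type u) (D : Ultrafilter I) (X : Type u)
    [NormedAddCommGroup X] [NormedSpace ℝ X] : X →ₗᵢ[ℝ] Ultrapower I D X where
  toFun := diagEmbedding I D X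
  map_add' x y := by
    unfold diagEmbedding
    rw [← Submodule.Quotient.mk_add]
    rfl
  map_smul' c x := by
    unfold diagEmbedding
    rw [RingHom.id_apply, ← Submodule.Quotient.mk_smul]
    rfl
  norm_map' x := by
    have hI : Nonempty I := Filter.nonempty_of_neBot (D : Filter I)
    refine le_antisymm ?_ ?_
    · calc ‖diagEmbedding I D X x‖ ≤ ‖constLp I X x‖ := Submodule.Quotient.norm_mk_le _ _
        _ = ‖x‖ := norm_constLp x
    · by_contra hlt
      push_neg at hlt
      set ε : ℝ := (‖x‖ - ‖diagEmbedding I D X x‖) / 2 with hε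
      have hε0 : 0 < ε := half_pos (sub_pos.2 hlt)
      obtain ⟨m, hm, hmlt⟩ :=
        Submodule.Quotient.norm_mk_lt (diagEmbedding I D X x) hε0
      have hmem : constLp I X x - m ∈ ultraNullIdeal I D X := by
        rw [← Submodule.Quotient.eq]
        exact hm.symm
      have htend : Filter.Tendsto (fun i => ‖(constLp I X x - m) i‖) (D : Filter I)
          (nhds 0) := hmem
      have : ∀ᶠ i in (D : Filter I), ‖(constLp I X x - m) i‖ < ε := by
        have := htend (Iio_mem_nhds hε0)
        exact this
      obtain ⟨i, hi⟩ := this.exists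
      have h1 : ‖x‖ ≤ ‖m i‖ + ‖(constLp I X x - m) i‖ := by
        have : x = m i + (constLp I X x - m) i := by
          simp [lp.coeFn_sub, Pi.sub_apply]
        calc ‖x‖ = ‖m i + (constLp I X x - m) i‖ := by rw [← this]
          _ ≤ ‖m i‖ + ‖(constLp I X x - m) i‖ := norm_add_le _ _
      have h2 : ‖m i‖ ≤ ‖m‖ := lp.norm_apply_le_norm ENNReal.top_ne_zero m i
      have : ‖x‖ < (‖diagEmbedding I D X x‖ + ε) + ε := by
        calc ‖x‖ ≤ ‖m i‖ + ‖(constLp I X x - m) i‖ := h1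
          _ < ‖m‖ + ε := by linarith
          _ < (‖diagEmbedding I D X x‖ + ε) + ε := by linarith
      rw [hε] at this
      linarith
  
lemma diag_surjective [FiniteDimensional ℝ X] :
    Function.Surjective (diagEmbedding I D X) := by
  intro q
  obtain ⟨f, rfl⟩ := Submodule.Quotient.mk_surjective _ q
  have hb : ∀ i, f i ∈ Metric.closedBall (0 : X) ‖f‖ := fun i => by
    simpa [dist_eq_norm] using lp.norm_apply_le_norm ENNReal.top_ne_zero f i
  have hcpt : IsCompact (Metric.closedBall (0 : X) ‖f‖) :=
    isCompact_closedBall 0 ‖f‖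
  have hle : (D : Filter I).map f ≤ Filter.principal (Metric.closedBall (0 : X) ‖f‖) := by
    rw [Filter.le_principal_iff, Filter.mem_map]
    exact Filter.Eventually.of_forall hb
  obtain ⟨x, -, hx⟩ := hcpt.ultrafilter_le_nhds (D.map f) hle
  refine ⟨x, ?_⟩
  unfold diagEmbedding
  rw [Submodule.Quotient.eq]
  show Filter.Tendsto (fun i => ‖(constLp I X x - f) i‖) (D : Filter I) (nhds 0)
  have : Filter.Tendsto (fun i => x - f i) (D : Filter I) (nhds (x - x)) :=
    tendsto_const_nhds.sub hx
  rw [sub_self] at this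
  have := this.norm
  rw [norm_zero] at this
  refine this.congr fun i => ?_
  simp [lp.coeFn_sub, Pi.sub_apply]

/-- For finite-dimensional `X`, the diagonal embedding is an isometric isomorphism. -/
def diagEquiv (I : Type u) (D : Ultrafilter I) (X : Type u)
    [NormedAddCommGroup X] [NormedSpace ℝ X] [FiniteDimensional ℝ X] :
    X ≃ₗᵢ[ℝ] Ultrapower I D X :=
  LinearIsometryEquiv.ofSurjective (diagLinearIsometry I D X) (diag_surjective D)

end Aux

/-- A Banach space elementary equivalent to a finite-dimensional Banach
space `X` is isometrically isomorphic to `X`: the class of elementary equivalence of a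
finite-dimensional space has exactly one member up to isometry. -/
theorem elemEquiv_finiteDimensional_isometric
    (X Y : Type u) [NormedAddCommGroup X] [NormedSpace ℝ X] [FiniteDimensional ℝ X]
    [NormedAddCommGroup Y] [NormedSpace ℝ Y] [CompleteSpace Y]
    (h : ElemEquiv X Y) :
    Nonempty (X ≃ₗᵢ[ℝ] Y) := by
  obtain ⟨K, G, ⟨e⟩⟩ := h
  -- Y embeds isometrically into X, hence is finite dimensional
  have eX : X ≃ₗᵢ[ℝ] Ultrapower K G X := diagEquiv K G X
  let j : Y →ₗ[ℝ] X :=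
    (eX.symm.toLinearMap.comp e.symm.toLinearMap).comp
      (diagLinearIsometry K G Y).toLinearMap
  have hjinj : Function.Injective j := by
    have h1 : Function.Injective (diagLinearIsometry K G Y) :=
      (diagLinearIsometry K G Y).injective
    intro a b hab
    apply h1
    apply e.symm.injective
    apply eX.symm.injective
    exact hab
  have : FiniteDimensional ℝ Y := Module.Finite.of_injective j hjinj
  exact ⟨(eX.trans e).trans (diagEquiv K G Y).symm⟩

end
end

section
/- For every infinite-dimensional Banach space X and every infinite cardinal κ, there exists a Banach space Y with dim Y = κ such that X ∼_f Y (X and Y are finitely equivalent). In particular, every infinite-dimensional Banach space is finitely equivalent to a separable Banach space. -/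
noncomputable section

universe u v

/-- A packaged real Banach space. -/
structure BanachSpace : Type (u + 1) where
  carrier : Type u
  [norm : NormedAddCommGroup carrier]
  [smulR : NormedSpace ℝ carrier]
  [complete : CompleteSpace carrier]

attribute [instance] BanachSpace.norm BanachSpace.smulR BanachSpace.complete

/-- `X` is *finitely representable* in `Y`: every finite-dimensional subspace of `X` is
`(1+ε)`-isomorphic to a subspace of `Y`, for every `ε > 0`. -/
def FinitelyRepresentable (X : Type u) (Y : Type v)
    [NormedAddCommGroup X] [NormedSpace ℝ X] [NormedAddCommGroup Y] [NormedSpace ℝ Y] :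
    Prop :=
  ∀ ε : ℝ, 0 < ε → ∀ A : Submodule ℝ X, FiniteDimensional ℝ A →
    ∃ (B : Submodule ℝ Y) (u : A ≃L[ℝ] B),
      ‖(u : A →L[ℝ] B)‖ * ‖(u.symm : B →L[ℝ] A)‖ < 1 + ε

/-- `X` and `Y` are *finitely equivalent*: each is finitely representable in the other. -/
def FinitelyEquivalent (X : Type u) (Y : Type v)
    [NormedAddCommGroup X] [NormedSpace ℝ X] [NormedAddCommGroup Y] [NormedSpace ℝ Y] :
    Prop :=
  FinitelyRepresentable X Y ∧ FinitelyRepresentable Y X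


namespace Stmt13

open Filter Topology Set
open scoped ENNReal NNReal


variable {V : Type*} [NormedAddCommGroup V] [NormedSpace ℝ V]
variable {Z : Type*} [NormedAddCommGroup Z] [NormedSpace ℝ Z]

lemma nf_lipschitz {n : ℕ} (x : Fin n → V) {M : ℝ} (hM : ∑ j, ‖x j‖ ≤ M) (a a' : Fin n → ℝ) :
    |‖∑ j, a j • x j‖ - ‖∑ j, a' j • x j‖| ≤ M * ‖a - a'‖ := by
  have h1 : ‖∑ j, a j • x j - ∑ j, a' j • x j‖ ≤ M * ‖a - a'‖ := by
    rw [← Finset.sum_sub_distrib]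
    have hb : ∀ j ∈ Finset.univ, ‖a j • x j - a' j • x j‖ ≤ ‖a - a'‖ * ‖x j‖ := by
      intro j _
      rw [← sub_smul, norm_smul]
      have : ‖a j - a' j‖ ≤ ‖a - a'‖ := by
        simpa using norm_le_pi_norm (a - a') j
      exact mul_le_mul_of_nonneg_right this (norm_nonneg _)
    calc ‖∑ j, (a j • x j - a' j • x j)‖ ≤ ∑ j, ‖a j • x j - a' j • x j‖ :=
          norm_sum_le _ _
      _ ≤ ∑ j, ‖a - a'‖ * ‖x j‖ := Finset.sum_le_sum hb
      _ = ‖a - a'‖ * ∑ j, ‖x j‖ := by rw [Finset.mul_sum]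
      _ ≤ ‖a - a'‖ * M := mul_le_mul_of_nonneg_left hM (norm_nonneg _)
      _ = M * ‖a - a'‖ := mul_comm _ _
  exact (abs_norm_sub_norm_le _ _).trans h1

lemma exists_basis_lower_bound {n : ℕ} (A : Submodule ℝ V) [FiniteDimensional ℝ A]
    (b : Module.Basis (Fin n) ℝ A) :
    ∃ c : ℝ, 0 < c ∧ ∀ a : Fin n → ℝ, c * ‖a‖ ≤ ‖(∑ j, a j • b j : A)‖ := by
  let T : A →L[ℝ] (Fin n → ℝ) :=
    LinearMap.toContinuousLinearMap (b.equivFun : A ≃ₗ[ℝ] (Fin n → ℝ)).toLinearMap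
  refine ⟨(‖T‖ + 1)⁻¹, by positivity, fun a => ?_⟩
  set x : A := ∑ j, a j • b j with hxdef
  have h1 : T x = a := by
    have hx : x = b.equivFun.symm a := by rw [b.equivFun_symm_apply, hxdef]
    have hT : T x = b.equivFun x := by
      simp [T, LinearMap.coe_toContinuousLinearMap']
    rw [hT, hx, LinearEquiv.apply_symm_apply]
  have h2 : ‖a‖ ≤ (‖T‖ + 1) * ‖x‖ := by
    calc ‖a‖ = ‖T x‖ := by rw [h1]
      _ ≤ ‖T‖ * ‖x‖ := T.le_opNorm x
      _ ≤ (‖T‖ + 1) * ‖x‖ := by nlinarith [norm_nonneg x]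
  rw [inv_mul_le_iff₀ (by positivity)]
  linarith [h2]

set_option maxHeartbeats 1000000 in
set_option synthInstance.maxHeartbeats 400000 in
lemma embed_of_close {n : ℕ} (A : Submodule ℝ V) [FiniteDimensional ℝ A]
    (b : Module.Basis (Fin n) ℝ A) (y : Fin n → Z) {ε c : ℝ} (hε : 0 < ε) (hc : 0 < c)
    (hlow : ∀ a : Fin n → ℝ, c * ‖a‖ ≤ ‖(∑ j, a j • b j : A)‖)
    (hclose : ∀ a : Fin n → ℝ, ‖a‖ ≤ 1 →
      |‖∑ j, a j • y j‖ - ‖(∑ j, a j • b j : A)‖| ≤ c * ε / (ε + 3)) :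
    ∃ (B : Submodule ℝ Z) (u : A ≃L[ℝ] B),
      ‖(u : A →L[ℝ] B)‖ * ‖(u.symm : B →L[ℝ] A)‖ < 1 + ε := by
  set η : ℝ := ε / (ε + 3) with hηdef
  have hη0 : 0 < η := by positivity
  have hη1 : η < 1 := by
    rw [hηdef, div_lt_one (by linarith)]; linarith
  have hηε : η * (ε + 3) = ε := by
    rw [hηdef]; field_simp
  -- homogeneous closeness
  have hhom : ∀ a : Fin n → ℝ,
      |‖∑ j, a j • y j‖ - ‖(∑ j, a j • b j : A)‖| ≤ η * (c * ‖a‖) := by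
    intro a
    rcases eq_or_ne a 0 with rfl | ha
    · simp
    · have hna : 0 < ‖a‖ := norm_pos_iff.2 ha
      have hnorm1 : ‖(‖a‖⁻¹ • a)‖ = 1 := by
        rw [norm_smul, norm_inv, norm_norm, inv_mul_cancel₀ hna.ne']
      have h := hclose (‖a‖⁻¹ • a) (le_of_eq hnorm1)
      have e1 : (∑ j, (‖a‖⁻¹ • a) j • y j) = ‖a‖⁻¹ • ∑ j, a j • y j := by
        rw [Finset.smul_sum]
        exact Finset.sum_congr rfl fun j _ => by simp [smul_smul]
      have e2 : (∑ j, (‖a‖⁻¹ • a) j • b j : A) = ‖a‖⁻¹ • (∑ j, a j • b j : A) := by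
        rw [Finset.smul_sum]
        exact Finset.sum_congr rfl fun j _ => by simp [smul_smul]
      rw [e1, e2, norm_smul, norm_smul, norm_inv, norm_norm, ← mul_sub, abs_mul,
        abs_inv, abs_norm] at h
      rw [inv_mul_le_iff₀ hna] at h
      calc |‖∑ j, a j • y j‖ - ‖(∑ j, a j • b j : A)‖| ≤ ‖a‖ * (c * ε / (ε + 3)) := h
        _ = η * (c * ‖a‖) := by rw [hηdef]; ring
  set T : A →ₗ[ℝ] Z := Module.Basis.constr b ℝ y with hTdef
  have key : ∀ x : A, |‖T x‖ - ‖x‖| ≤ η * ‖x‖ := by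
    intro x
    have hx : (∑ j, b.equivFun x j • b j : A) = x := b.sum_equivFun x
    have hTx : T x = ∑ j, b.equivFun x j • y j := b.constr_apply_fintype ℝ y x
    have h := hhom (b.equivFun x)
    rw [hx] at h
    rw [hTx]
    refine h.trans ?_
    have h2 := hlow (b.equivFun x)
    rw [hx] at h2
    nlinarith [hη0.le]
  have hub : ∀ x : A, ‖T x‖ ≤ (1 + η) * ‖x‖ := by
    intro x; have := abs_le.1 (key x); nlinarith [this.2]
  have hlb : ∀ x : A, (1 - η) * ‖x‖ ≤ ‖T x‖ := by
    intro x; have := abs_le.1 (key x); nlinarith [this.1]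
  have hinj : Function.Injective T := by
    intro p q hpq
    have h0 : T (p - q) = 0 := by rw [map_sub, hpq, sub_self]
    have h1 := hlb (p - q)
    rw [h0, norm_zero] at h1
    have : ‖p - q‖ ≤ 0 := by nlinarith
    have : p - q = 0 := norm_le_zero_iff.1 this
    exact sub_eq_zero.1 this
  set e : A ≃ₗ[ℝ] LinearMap.range T := LinearEquiv.ofInjective T hinj with hedef
  set u : A ≃L[ℝ] LinearMap.range T := e.toContinuousLinearEquiv with hudef
  have hval : ∀ x : A, ‖u x‖ = ‖T x‖ := by
    intro x
    have hcoe : ((u x : LinearMap.range T) : Z) = T x := by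
      rw [hudef, LinearEquiv.coe_toContinuousLinearEquiv']
      exact LinearEquiv.ofInjective_apply T x
    rw [Submodule.coe_norm, hcoe]
  have hu : ‖(u : A →L[ℝ] LinearMap.range T)‖ ≤ 1 + η := by
    refine ContinuousLinearMap.opNorm_le_bound _ (by linarith) fun x => ?_
    rw [ContinuousLinearEquiv.coe_coe, hval x]
    exact hub x
  have husymm : ‖(u.symm : LinearMap.range T →L[ℝ] A)‖ ≤ (1 - η)⁻¹ := by
    refine ContinuousLinearMap.opNorm_le_bound _ (inv_nonneg.2 (by linarith)) fun z => ?_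
    rw [ContinuousLinearEquiv.coe_coe]
    have h1 := hlb (u.symm z)
    have h2 : ‖T (u.symm z)‖ = ‖z‖ := by
      rw [← hval (u.symm z), u.apply_symm_apply]
    rw [h2] at h1
    rw [inv_mul_eq_div, le_div_iff₀ (by linarith)]
    linarith
  refine ⟨LinearMap.range T, u, ?_⟩
  calc ‖(u : A →L[ℝ] LinearMap.range T)‖ * ‖(u.symm : LinearMap.range T →L[ℝ] A)‖
      ≤ (1 + η) * (1 - η)⁻¹ :=
        _root_.mul_le_mul hu husymm (ContinuousLinearMap.opNorm_nonneg _) (by linarith)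
    _ < 1 + ε := by
        rw [mul_inv_lt_iff₀ (by linarith)]
        nlinarith


lemma exists_net (n : ℕ) {r : ℝ} (hr : 0 < r) :
    ∃ P : Finset (Fin n → ℝ), ∀ a : Fin n → ℝ, ‖a‖ ≤ 1 → ∃ p ∈ P, ‖a - p‖ ≤ r := by
  have hc : TotallyBounded (Metric.closedBall (0 : Fin n → ℝ) 1) :=
    (isCompact_closedBall _ _).totallyBounded
  rcases Metric.totallyBounded_iff.1 hc r hr with ⟨t, htf, hcov⟩
  refine ⟨htf.toFinset, fun a ha => ?_⟩
  have hmem : a ∈ ⋃ y ∈ t, Metric.ball y r := by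
    apply hcov
    rw [Metric.mem_closedBall, dist_zero_right]
    exact ha
  rcases Set.mem_iUnion₂.1 hmem with ⟨p, hp, hball⟩
  refine ⟨p, htf.mem_toFinset.2 hp, ?_⟩
  rw [← dist_eq_norm]
  exact (Metric.mem_ball.1 hball).le

lemma abs_sub_le_of_floor_div_eq {s s' g : ℝ} (hg : 0 < g) (h : ⌊s / g⌋ = ⌊s' / g⌋) :
    |s - s'| ≤ g := by
  have l1 : s / g < s' / g + 1 := by
    calc s / g < (⌊s / g⌋ : ℝ) + 1 := Int.lt_floor_add_one _
      _ = (⌊s' / g⌋ : ℝ) + 1 := by rw [h]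
      _ ≤ s' / g + 1 := by linarith [Int.floor_le (s' / g)]
  have l2 : s' / g < s / g + 1 := by
    calc s' / g < (⌊s' / g⌋ : ℝ) + 1 := Int.lt_floor_add_one _
      _ = (⌊s / g⌋ : ℝ) + 1 := by rw [← h]
      _ ≤ s / g + 1 := by linarith [Int.floor_le (s / g)]
  have habs : |s / g - s' / g| ≤ 1 := by
    rw [abs_le]; constructor <;> [linarith; linarith]
  have heq : s - s' = g * (s / g - s' / g) := by field_simp
  rw [heq, abs_mul, abs_of_pos hg]
  calc g * |s / g - s' / g| ≤ g * 1 := mul_le_mul_of_nonneg_left habs hg.le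
    _ = g := mul_one g

set_option maxHeartbeats 1000000 in
lemma exists_countable_tuples (n : ℕ) :
    ∃ T : Set (Fin n → V), T.Countable ∧
      ∀ (x : Fin n → V) (δ : ℝ), 0 < δ → ∃ t ∈ T, ∀ a : Fin n → ℝ, ‖a‖ ≤ 1 →
        |‖∑ j, a j • t j‖ - ‖∑ j, a j • x j‖| ≤ δ := by
  have hrpos : ∀ k L : ℕ, (0:ℝ) < ((k:ℝ)+1)⁻¹ / (3*((L:ℝ)+1)) := fun k L => by positivity
  choose P hP using fun (k L : ℕ) => exists_net n (hrpos k L)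
  set g : ℕ → ℝ := fun k => ((k:ℝ)+1)⁻¹ / 3 with hgdef
  have hg : ∀ k, 0 < g k := fun k => by positivity
  set S : (Σ k : ℕ, Σ L : ℕ, ({p // p ∈ P k L} → ℤ)) → Set (Fin n → V) := fun q =>
    {x | (∑ j, ‖x j‖) ≤ (q.2.1 : ℝ) + 1 ∧
      ∀ p : {p // p ∈ P q.1 q.2.1},
        ⌊‖∑ j, (p : Fin n → ℝ) j • x j‖ / g q.1⌋ = q.2.2 p} with hSdef
  refine ⟨⋃ q, Set.range (fun h : (S q).Nonempty => h.some), ?_, ?_⟩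
  · refine Set.countable_iUnion fun q => Set.countable_range _
  intro x δ hδ
  obtain ⟨k, hk⟩ : ∃ k : ℕ, ((k:ℝ)+1)⁻¹ ≤ δ := by
    obtain ⟨k, hk⟩ := exists_nat_gt δ⁻¹
    refine ⟨k, ?_⟩
    rw [inv_le_comm₀ (by positivity) hδ]
    calc δ⁻¹ ≤ (k:ℝ) := hk.le
      _ ≤ (k:ℝ) + 1 := by linarith
  obtain ⟨L, hL⟩ : ∃ L : ℕ, (∑ j, ‖x j‖) ≤ (L:ℝ) + 1 := by
    obtain ⟨L, hL⟩ := exists_nat_ge (∑ j, ‖x j‖)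
    exact ⟨L, by linarith⟩
  set q : (Σ k : ℕ, Σ L : ℕ, ({p // p ∈ P k L} → ℤ)) :=
    ⟨k, L, fun p => ⌊‖∑ j, (p : Fin n → ℝ) j • x j‖ / g k⌋⟩ with hqdef
  have hqne : (S q).Nonempty := ⟨x, hL, fun p => rfl⟩
  refine ⟨hqne.some, Set.mem_iUnion.2 ⟨q, ⟨hqne, rfl⟩⟩, fun a ha => ?_⟩
  obtain ⟨ht1, ht2⟩ := hqne.some_mem
  set t := hqne.some with htdef
  obtain ⟨p, hpP, hpa⟩ := hP k L a ha
  have lipt := nf_lipschitz t ht1 a p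
  have lipx := nf_lipschitz x hL p a
  have hfl : |‖∑ j, p j • t j‖ - ‖∑ j, p j • x j‖| ≤ g k := by
    refine abs_sub_le_of_floor_div_eq (hg k) ?_
    exact ht2 ⟨p, hpP⟩
  have hLr : ((L:ℝ)+1) * (((k:ℝ)+1)⁻¹ / (3*((L:ℝ)+1))) = g k := by
    have hL0 : ((L:ℝ)+1) ≠ 0 := by positivity
    rw [hgdef]
    field_simp
  have hbound1 : ((L:ℝ)+1) * ‖a - p‖ ≤ g k := by
    calc ((L:ℝ)+1) * ‖a - p‖ ≤ ((L:ℝ)+1) * (((k:ℝ)+1)⁻¹ / (3*((L:ℝ)+1))) :=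
          mul_le_mul_of_nonneg_left hpa (by positivity)
      _ = g k := hLr
  have hbound2 : ((L:ℝ)+1) * ‖p - a‖ ≤ g k := by rwa [norm_sub_rev] at hbound1
  have h3g : 3 * g k ≤ δ := by
    rw [hgdef]
    calc 3 * (((k:ℝ)+1)⁻¹ / 3) = ((k:ℝ)+1)⁻¹ := by ring
      _ ≤ δ := hk
  have tr1 := abs_sub_le (‖∑ j, a j • t j‖) (‖∑ j, p j • t j‖) (‖∑ j, a j • x j‖)
  have tr2 := abs_sub_le (‖∑ j, p j • t j‖) (‖∑ j, p j • x j‖) (‖∑ j, a j • x j‖)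
  linarith [lipt, lipx, hfl, hbound1, hbound2, h3g, tr1, tr2]


section Ultra

instance factOneLeTop : Fact ((1:ℝ≥0∞) ≤ ∞) := ⟨le_top⟩

variable {I : Type*} (𝒰 : Ultrafilter I)
variable (X : Type*) [NormedAddCommGroup X] [NormedSpace ℝ X]

abbrev LInf (I : Type*) (X : Type*) [NormedAddCommGroup X] : Type _ :=
  ↥(lp (fun _ : I => X) ∞)

def nullIdeal : Submodule ℝ (LInf I X) where
  carrier := {f | Tendsto (fun i => ‖f i‖) 𝒰 (nhds 0)}
  zero_mem' := by
    have h : ∀ i : I, ‖(0 : LInf I X) i‖ = 0 := fun i => by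
      rw [lp.coeFn_zero]; simp
    simpa [h] using (tendsto_const_nhds : Tendsto (fun _ : I => (0:ℝ)) 𝒰 (nhds 0))
  add_mem' := by
    intro f g hf hg
    refine squeeze_zero (fun i => norm_nonneg _) (fun i => ?_) (by simpa using hf.add hg)
    rw [lp.coeFn_add, Pi.add_apply]
    exact norm_add_le _ _
  smul_mem' := by
    intro c f hf
    have h : ∀ i : I, ‖(c • f) i‖ = ‖c‖ * ‖f i‖ := fun i => by
      rw [lp.coeFn_smul, Pi.smul_apply, norm_smul]
    have h2 : Tendsto (fun i => ‖c‖ * ‖f i‖) 𝒰 (nhds 0) := by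
      simpa using hf.const_mul ‖c‖
    exact h2.congr fun i => (h i).symm

lemma isClosed_nullIdeal :
    IsClosed ((nullIdeal 𝒰 X : Submodule ℝ (LInf I X)) : Set (LInf I X)) := by
  refine isClosed_of_closure_subset fun h hcl => ?_
  show Tendsto (fun i => ‖h i‖) 𝒰 (nhds 0)
  rw [Metric.tendsto_nhds]
  intro ε hε
  obtain ⟨g, hgmem, hgdist⟩ := Metric.mem_closure_iff.1 hcl (ε/2) (half_pos hε)
  have hgtend : Tendsto (fun i => ‖g i‖) 𝒰 (nhds 0) := hgmem
  have hev : ∀ᶠ i in 𝒰, ‖g i‖ < ε/2 := by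
    have := Metric.tendsto_nhds.1 hgtend (ε/2) (half_pos hε)
    filter_upwards [this] with i hi
    rw [Real.dist_eq, sub_zero, abs_of_nonneg (norm_nonneg _)] at hi
    exact hi
  filter_upwards [hev] with i hi
  rw [Real.dist_eq, sub_zero, abs_of_nonneg (norm_nonneg _)]
  have h1 : ‖h i - g i‖ ≤ ‖h - g‖ := by
    have := lp.norm_apply_le_norm (ENNReal.top_ne_zero) (h - g) i
    rwa [lp.coeFn_sub, Pi.sub_apply] at this
  have h2 : ‖h - g‖ < ε/2 := by rwa [dist_eq_norm] at hgdist
  calc ‖h i‖ = ‖g i + (h i - g i)‖ := by congr 1; abel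
    _ ≤ ‖g i‖ + ‖h i - g i‖ := norm_add_le _ _
    _ < ε/2 + ε/2 := by linarith
    _ = ε := by ring

instance : IsClosed ((nullIdeal 𝒰 X : Submodule ℝ (LInf I X)) : Set (LInf I X)) :=
  isClosed_nullIdeal 𝒰 X

abbrev Ultra : Type _ := LInf I X ⧸ nullIdeal 𝒰 X

lemma exists_ultralim {M : ℝ} (f : I → ℝ) (h0 : ∀ i, 0 ≤ f i) (hM : ∀ i, f i ≤ M) :
    ∃ L, 0 ≤ L ∧ Tendsto f 𝒰 (nhds L) := by
  have hle : (Ultrafilter.map f 𝒰 : Filter ℝ) ≤ 𝓟 (Set.Icc 0 M) := by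
    rw [Filter.le_principal_iff]
    rw [Ultrafilter.coe_map, Filter.mem_map]
    exact Filter.univ_mem' fun i => ⟨h0 i, hM i⟩
  obtain ⟨L, hL, hconv⟩ := isCompact_Icc.ultrafilter_le_nhds (Ultrafilter.map f 𝒰) hle
  exact ⟨L, hL.1, hconv⟩

lemma norm_mk_eq (f : LInf I X) {L : ℝ}
    (hL : Tendsto (fun i => ‖f i‖) 𝒰 (nhds L)) :
    ‖(Submodule.Quotient.mk f : Ultra 𝒰 X)‖ = L := by
  have hL0 : 0 ≤ L := ge_of_tendsto hL (Filter.Eventually.of_forall fun i => norm_nonneg _)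
  refine le_antisymm ?_ ?_
  · refine le_of_forall_pos_le_add fun ε hε => ?_
    have hS : ∀ᶠ i in 𝒰, ‖f i‖ < L + ε :=
      hL.eventually (gt_mem_nhds (lt_add_of_pos_right L hε))
    have hmem : Memℓp (fun i => if ‖f i‖ < L + ε then f i else 0) (∞ : ℝ≥0∞) := by
      apply memℓp_infty
      refine ⟨L + ε, ?_⟩
      rintro r ⟨i, rfl⟩
      dsimp only
      split
      · next h => exact h.le
      · simpa using by positivity
    set m : LInf I X := ⟨fun i => if ‖f i‖ < L + ε then f i else 0, hmem⟩ with hmdef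
    have hmk : (Submodule.Quotient.mk m : Ultra 𝒰 X) = Submodule.Quotient.mk f := by
      rw [Submodule.Quotient.eq]
      show Tendsto (fun i => ‖(m - f) i‖) 𝒰 (nhds 0)
      have hEq : (fun i => ‖(m - f) i‖) =ᶠ[𝒰] fun _ => (0:ℝ) := by
        filter_upwards [hS] with i hi
        rw [lp.coeFn_sub, Pi.sub_apply]
        have : m i = f i := by
          show (if ‖f i‖ < L + ε then f i else 0) = f i
          rw [if_pos hi]
        rw [this, sub_self, norm_zero]
      exact tendsto_const_nhds.congr' hEq.symm
    rw [← hmk]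
    refine (Submodule.Quotient.norm_mk_le _ m).trans ?_
    refine lp.norm_le_of_forall_le (by positivity) fun i => ?_
    show ‖if ‖f i‖ < L + ε then f i else 0‖ ≤ L + ε
    split
    · next h => exact h.le
    · simpa using by positivity
  · refine le_of_forall_pos_le_add fun ε hε => ?_
    obtain ⟨m, hmmk, hmnorm⟩ :=
      Submodule.Quotient.norm_mk_lt (Submodule.Quotient.mk f : Ultra 𝒰 X) hε
    have hnull : (f - m) ∈ nullIdeal 𝒰 X := (Submodule.Quotient.eq _).1 hmmk.symm
    have hnull' : Tendsto (fun i => ‖(f - m) i‖) 𝒰 (nhds 0) := hnull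
    have hsub : Tendsto (fun i => ‖f i‖ - ‖(f - m) i‖) 𝒰 (nhds (L - 0)) := hL.sub hnull'
    have hle : ∀ i, ‖f i‖ - ‖(f - m) i‖ ≤ ‖m‖ := by
      intro i
      have h1 : ‖f i‖ ≤ ‖(f - m) i‖ + ‖m i‖ := by
        rw [lp.coeFn_sub, Pi.sub_apply]
        calc ‖f i‖ = ‖(f i - m i) + m i‖ := by congr 1; abel
          _ ≤ ‖f i - m i‖ + ‖m i‖ := norm_add_le _ _
      have h2 := lp.norm_apply_le_norm (ENNReal.top_ne_zero) m i
      linarith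
    have := le_of_tendsto hsub (Filter.Eventually.of_forall hle)
    rw [sub_zero] at this
    linarith

lemma tendsto_norm_mk (f : LInf I X) :
    Tendsto (fun i => ‖f i‖) 𝒰 (nhds ‖(Submodule.Quotient.mk f : Ultra 𝒰 X)‖) := by
  obtain ⟨L, _, hconv⟩ := exists_ultralim 𝒰 (fun i => ‖f i‖) (fun i => norm_nonneg _)
    (fun i => lp.norm_apply_le_norm (ENNReal.top_ne_zero) f i)
  rwa [norm_mk_eq 𝒰 X f hconv]

def constLinf (x : X) : LInf I X :=
  ⟨fun _ => x, memℓp_infty ⟨‖x‖, by rintro r ⟨i, rfl⟩; exact le_rfl⟩⟩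

def diagL : X →ₗ[ℝ] Ultra 𝒰 X where
  toFun x := Submodule.Quotient.mk (constLinf (I := I) X x)
  map_add' x y := by
    show Submodule.Quotient.mk (constLinf (I := I) X (x + y)) =
      Submodule.Quotient.mk (constLinf (I := I) X x) + Submodule.Quotient.mk (constLinf (I := I) X y)
    rw [← Submodule.Quotient.mk_add]
    congr 1
  map_smul' c x := by
    show Submodule.Quotient.mk (constLinf (I := I) X (c • x)) =
      (RingHom.id ℝ) c • Submodule.Quotient.mk (constLinf (I := I) X x)
    rw [RingHom.id_apply, ← Submodule.Quotient.mk_smul]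
    congr 1

lemma norm_diagL (x : X) : ‖diagL 𝒰 X x‖ = ‖x‖ := by
  show ‖(Submodule.Quotient.mk (constLinf (I := I) X x) : Ultra 𝒰 X)‖ = ‖x‖
  exact norm_mk_eq 𝒰 X _ (tendsto_const_nhds :
    Tendsto (fun _ : I => ‖x‖) 𝒰 (nhds ‖x‖))

end Ultra


lemma submodule_coe_sum_smul {W : Type*} [NormedAddCommGroup W] [NormedSpace ℝ W]
    (A : Submodule ℝ W) {n : ℕ} (v : Fin n → A) (a : Fin n → ℝ) :
    ((∑ j, a j • v j : A) : W) = ∑ j, a j • (v j : W) := by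
  push_cast
  rfl

lemma finrep_of_isometry {Z' W' X' : Type*} [NormedAddCommGroup Z'] [NormedSpace ℝ Z']
    [NormedAddCommGroup W'] [NormedSpace ℝ W'] [NormedAddCommGroup X'] [NormedSpace ℝ X']
    (J : Z' →ₗ[ℝ] W') (hJ : ∀ z, ‖J z‖ = ‖z‖)
    (h : FinitelyRepresentable W' X') : FinitelyRepresentable Z' X' := by
  intro ε hε A hA
  have hinj : Function.Injective J := by
    intro p q hpq
    have h0 : ‖J (p - q)‖ = 0 := by rw [map_sub, hpq, sub_self, norm_zero]
    rw [hJ] at h0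
    exact sub_eq_zero.1 (norm_eq_zero.1 h0)
  haveI : FiniteDimensional ℝ A := hA
  set A' : Submodule ℝ W' := A.map J with hA'def
  haveI hA' : FiniteDimensional ℝ A' := Module.Finite.map A J
  obtain ⟨B, u', hu'⟩ := h ε hε A' hA'
  set e : A ≃ₗ[ℝ] A' := Submodule.equivMapOfInjective J hinj A with hedef
  have he : ∀ x : A, ‖e x‖ = ‖x‖ := by
    intro x
    rw [Submodule.coe_norm, Submodule.coe_equivMapOfInjective_apply, hJ, ← Submodule.coe_norm]
  have hesymm : ∀ w : A', ‖e.symm w‖ = ‖w‖ := fun w => by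
    conv_rhs => rw [← e.apply_symm_apply w]
    rw [he]
  set u : A ≃L[ℝ] B := e.toContinuousLinearEquiv.trans u' with hudef
  have happ : ∀ x : A, u x = u' (e x) := by
    intro x
    rw [hudef, ContinuousLinearEquiv.trans_apply]
    congr 1
  have happ2 : ∀ z : B, u.symm z = e.symm (u'.symm z) := by
    intro z
    rw [hudef, ContinuousLinearEquiv.symm_trans_apply]
    rw [LinearEquiv.coe_toContinuousLinearEquiv_symm']
  refine ⟨B, u, ?_⟩
  have h1 : ‖(u : A →L[ℝ] B)‖ ≤ ‖(u' : A' →L[ℝ] B)‖ := by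
    refine ContinuousLinearMap.opNorm_le_bound _ (ContinuousLinearMap.opNorm_nonneg _) fun x => ?_
    rw [ContinuousLinearEquiv.coe_coe, happ x]
    calc ‖u' (e x)‖ = ‖(u' : A' →L[ℝ] B) (e x)‖ := by rw [ContinuousLinearEquiv.coe_coe]
      _ ≤ ‖(u' : A' →L[ℝ] B)‖ * ‖e x‖ := ContinuousLinearMap.le_opNorm _ _
      _ = ‖(u' : A' →L[ℝ] B)‖ * ‖x‖ := by rw [he]
  have h2 : ‖(u.symm : B →L[ℝ] A)‖ ≤ ‖(u'.symm : B →L[ℝ] A')‖ := by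
    refine ContinuousLinearMap.opNorm_le_bound _ (ContinuousLinearMap.opNorm_nonneg _) fun z => ?_
    rw [ContinuousLinearEquiv.coe_coe, happ2 z, hesymm]
    calc ‖u'.symm z‖ = ‖(u'.symm : B →L[ℝ] A') z‖ := by rw [ContinuousLinearEquiv.coe_coe]
      _ ≤ ‖(u'.symm : B →L[ℝ] A')‖ * ‖z‖ := ContinuousLinearMap.le_opNorm _ _
  calc ‖(u : A →L[ℝ] B)‖ * ‖(u.symm : B →L[ℝ] A)‖
      ≤ ‖(u' : A' →L[ℝ] B)‖ * ‖(u'.symm : B →L[ℝ] A')‖ :=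
        _root_.mul_le_mul h1 h2 (ContinuousLinearMap.opNorm_nonneg _)
          (ContinuousLinearMap.opNorm_nonneg _)
    _ < 1 + ε := hu'

set_option maxHeartbeats 1000000 in
set_option synthInstance.maxHeartbeats 400000 in
lemma ultra_finrep {I : Type*} (𝒰 : Ultrafilter I)
    (X : Type*) [NormedAddCommGroup X] [NormedSpace ℝ X] :
    FinitelyRepresentable (Ultra 𝒰 X) X := by
  intro ε hε A hA
  haveI : FiniteDimensional ℝ A := hA
  set n := Module.finrank ℝ A with hndef
  set b : Module.Basis (Fin n) ℝ A := Module.finBasis ℝ A with hbdef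
  obtain ⟨c, hc, hlow⟩ := exists_basis_lower_bound A b
  choose f hf using fun j : Fin n =>
    Submodule.Quotient.mk_surjective (nullIdeal 𝒰 X) ((b j : Ultra 𝒰 X))
  set Λ : ℝ := (∑ j, ‖f j‖) + 1 with hΛdef
  have hΛpos : 0 < Λ := by
    have : (0:ℝ) ≤ ∑ j, ‖f j‖ := Finset.sum_nonneg fun j _ => norm_nonneg _
    rw [hΛdef]; linarith
  have hΛsum : ∑ j, ‖f j‖ ≤ Λ := by rw [hΛdef]; linarith
  set δ0 : ℝ := c * ε / (ε + 3) with hδ0def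
  have hδ0pos : 0 < δ0 := by rw [hδ0def]; positivity
  obtain ⟨P, hPnet⟩ := exists_net n (show (0:ℝ) < δ0 / (3 * Λ) by positivity)
  -- identification of quotient classes
  have hmk : ∀ a : Fin n → ℝ, (Submodule.Quotient.mk (∑ j, a j • f j) : Ultra 𝒰 X)
      = ((∑ j, a j • b j : A) : Ultra 𝒰 X) := by
    intro a
    calc (Submodule.Quotient.mk (∑ j, a j • f j) : Ultra 𝒰 X)
        = (nullIdeal 𝒰 X).mkQ (∑ j, a j • f j) := (Submodule.mkQ_apply _ _).symm
      _ = ∑ j, a j • (nullIdeal 𝒰 X).mkQ (f j) := by rw [map_sum]; simp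
      _ = ∑ j, a j • ((b j : A) : Ultra 𝒰 X) := by
          refine Finset.sum_congr rfl fun j _ => ?_
          rw [Submodule.mkQ_apply, hf j]
      _ = ((∑ j, a j • b j : A) : Ultra 𝒰 X) := (submodule_coe_sum_smul A b a).symm
  have hconv : ∀ a : Fin n → ℝ, Tendsto (fun i => ‖∑ j, a j • f j i‖) 𝒰
      (nhds ‖(∑ j, a j • b j : A)‖) := by
    intro a
    have h1 := tendsto_norm_mk 𝒰 X (∑ j, a j • f j)
    rw [hmk a, ← Submodule.coe_norm] at h1
    refine h1.congr fun i => ?_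
    congr 1
    rw [lp.coeFn_sum, Finset.sum_apply]
    refine Finset.sum_congr rfl fun j _ => ?_
    rw [lp.coeFn_smul, Pi.smul_apply]
  have hbnorm : ∀ j, ‖((b j : A) : Ultra 𝒰 X)‖ ≤ ‖f j‖ := by
    intro j
    rw [← hf j]
    exact Submodule.Quotient.norm_mk_le _ (f j)
  have hbsum : ∑ j, ‖((b j : A) : Ultra 𝒰 X)‖ ≤ Λ :=
    le_trans (Finset.sum_le_sum fun j _ => hbnorm j) hΛsum
  have hev : ∀ᶠ i in (𝒰 : Filter I), ∀ p ∈ P,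
      |‖∑ j, p j • f j i‖ - ‖(∑ j, p j • b j : A)‖| < δ0/3 := by
    rw [Filter.eventually_all_finset]
    intro p _
    have h2 := Metric.tendsto_nhds.1 (hconv p) (δ0/3) (by positivity)
    filter_upwards [h2] with i hi
    rwa [Real.dist_eq] at hi
  obtain ⟨i₀, hi₀⟩ := hev.exists
  have hysum : ∑ j, ‖f j i₀‖ ≤ Λ := by
    refine le_trans (Finset.sum_le_sum fun j _ => ?_) hΛsum
    exact lp.norm_apply_le_norm ENNReal.top_ne_zero (f j) i₀
  refine embed_of_close A b (fun j => f j i₀) hε hc hlow ?_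
  intro a ha
  obtain ⟨p, hp, hpa⟩ := hPnet a ha
  have lip1 : |‖∑ j, a j • f j i₀‖ - ‖∑ j, p j • f j i₀‖| ≤ Λ * ‖a - p‖ :=
    nf_lipschitz (fun j => f j i₀) hysum a p
  have lipN : |‖(∑ j, p j • b j : A)‖ - ‖(∑ j, a j • b j : A)‖| ≤ Λ * ‖p - a‖ := by
    have h3 := nf_lipschitz (fun j => ((b j : A) : Ultra 𝒰 X)) hbsum p a
    rwa [← submodule_coe_sum_smul A b p, ← submodule_coe_sum_smul A b a,
      ← Submodule.coe_norm, ← Submodule.coe_norm] at h3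
  have hmid := hi₀ p hp
  have hr1 : Λ * ‖a - p‖ ≤ δ0/3 := by
    calc Λ * ‖a - p‖ ≤ Λ * (δ0 / (3 * Λ)) := mul_le_mul_of_nonneg_left hpa hΛpos.le
      _ = δ0/3 := by field_simp
  have hr2 : Λ * ‖p - a‖ ≤ δ0/3 := by rwa [norm_sub_rev] at hr1
  have tr1 := abs_sub_le (‖∑ j, a j • f j i₀‖) (‖∑ j, p j • f j i₀‖)
    (‖(∑ j, a j • b j : A)‖)
  have tr2 := abs_sub_le (‖∑ j, p j • f j i₀‖) (‖(∑ j, p j • b j : A)‖)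
    (‖(∑ j, a j • b j : A)‖)
  show |‖∑ j, a j • f j i₀‖ - ‖(∑ j, a j • b j : A)‖| ≤ c * ε / (ε + 3)
  rw [← hδ0def]
  have total := le_trans tr1 (add_le_add (le_trans lip1 hr1)
    (le_trans tr2 (add_le_add hmid.le (le_trans lipN hr2))))
  exact le_trans total (by linarith)


lemma isSeparable_span_finite {Z : Type*} [NormedAddCommGroup Z] [NormedSpace ℝ Z]
    {s : Set Z} (hs : s.Finite) :
    TopologicalSpace.IsSeparable ((Submodule.span ℝ s : Submodule ℝ Z) : Set Z) := by
  haveI : FiniteDimensional ℝ (Submodule.span ℝ s) := FiniteDimensional.span_of_finite ℝ hs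
  have h1 : TopologicalSpace.IsSeparable (Set.univ : Set (Submodule.span ℝ s)) :=
    TopologicalSpace.isSeparable_univ_iff.2 inferInstance
  have h2 := h1.image (continuous_subtype_val :
    Continuous ((↑) : Submodule.span ℝ s → Z))
  rwa [Set.image_univ, Subtype.range_coe] at h2

universe w

lemma exists_dense_card {Z : Type w} [NormedAddCommGroup Z] [NormedSpace ℝ Z] (A : Set Z) :
    ∃ D : Set Z, ((Submodule.span ℝ A : Submodule ℝ Z) : Set Z) ⊆ closure D ∧
      Cardinal.mk D ≤ max (Cardinal.mk A) Cardinal.aleph0 := by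
  have hsep : ∀ s : Finset (↥A), ∃ D : Set Z, D.Countable ∧
      ((Submodule.span ℝ ((fun (a : ↥A) => (a : Z)) '' (s : Set ↥A)) : Submodule ℝ Z) : Set Z)
        ⊆ closure D :=
    fun s => isSeparable_span_finite (s.finite_toSet.image _)
  choose D hDc hDcl using hsep
  refine ⟨⋃ s : Finset (↥A), D s, ?_, ?_⟩
  · intro x hx
    obtain ⟨t, htA, hxt⟩ := Submodule.mem_span_finite_of_mem_span hx
    classical
    set s : Finset (↥A) := t.subtype (· ∈ A) with hsdef
    have himg : (fun (a : ↥A) => (a : Z)) '' (s : Set ↥A) = (t : Set Z) := by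
      ext z
      constructor
      · rintro ⟨a, ha, rfl⟩
        have : a ∈ t.subtype (· ∈ A) := by exact_mod_cast ha
        exact Finset.mem_subtype.1 this
      · intro hz
        exact ⟨⟨z, htA hz⟩, by simpa [hsdef, Finset.mem_subtype] using hz, rfl⟩
    have hx2 : x ∈ ((Submodule.span ℝ ((fun (a : ↥A) => (a : Z)) '' (s : Set ↥A)) :
        Submodule ℝ Z) : Set Z) := by
      rw [himg]; exact hxt
    exact ((hDcl s).trans (closure_mono (Set.subset_iUnion _ s))) hx2
  · have hfinset : Cardinal.mk (Finset ↥A) ≤ max (Cardinal.mk A) Cardinal.aleph0 := by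
      rcases finite_or_infinite (↥A) with hfin | hinf
      · haveI := hfin
        haveI := Fintype.ofFinite (↥A)
        exact le_trans (le_of_lt (Cardinal.lt_aleph0_iff_finite.2 inferInstance))
          (le_max_right _ _)
      · haveI := hinf
        rw [Cardinal.mk_finset_of_infinite]
        exact le_max_left _ _
    calc Cardinal.mk (⋃ s : Finset (↥A), D s)
        ≤ Cardinal.mk (Finset ↥A) * ⨆ s, Cardinal.mk (D s) := Cardinal.mk_iUnion_le _
      _ ≤ max (Cardinal.mk A) Cardinal.aleph0 * Cardinal.aleph0 := by
          refine mul_le_mul' hfinset (ciSup_le' fun s => ?_)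
          haveI := (hDc s).to_subtype
          exact Cardinal.mk_le_aleph0
      _ = max (Cardinal.mk A) Cardinal.aleph0 := by
          rw [Cardinal.mul_eq_max (le_max_right _ _) le_rfl]
          exact max_eq_left (le_max_right _ _)

lemma not_finiteDim_of_separated {Z : Type*} [NormedAddCommGroup Z] [NormedSpace ℝ Z]
    {ι' : Type*} [Infinite ι'] {R : ℝ} (y : ι' → Z)
    (hy : ∀ i, ‖y i‖ ≤ R) (hsep : ∀ i j, i ≠ j → 1 ≤ ‖y i - y j‖) :
    ¬ FiniteDimensional ℝ Z := by
  intro hfin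
  have hcomp : TotallyBounded (Metric.closedBall (0:Z) R) :=
    (isCompact_closedBall _ _).totallyBounded
  obtain ⟨t, htf, hcov⟩ := Metric.totallyBounded_iff.1 hcomp (1/2) (by norm_num)
  have hmem : ∀ i, y i ∈ ⋃ z ∈ t, Metric.ball z (1/2) := fun i => hcov (by
    rw [Metric.mem_closedBall, dist_zero_right]; exact hy i)
  choose ctr hctr hball using fun i => Set.mem_iUnion₂.1 (hmem i)
  haveI : Finite ↥t := htf.to_subtype
  obtain ⟨i, j, hij, heq⟩ :=
    Finite.exists_ne_map_eq_of_infinite (fun i => (⟨ctr i, hctr i⟩ : ↥t))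
  have hctreq : ctr i = ctr j := congrArg Subtype.val heq
  have hbi := Metric.mem_ball.1 (hball i)
  have hbj := Metric.mem_ball.1 (hball j)
  rw [← hctreq] at hbj
  have h1 : dist (y i) (y j) < 1 := by
    have htri := dist_triangle_right (y i) (y j) (ctr i)
    linarith
  rw [dist_eq_norm] at h1
  exact absurd (hsep i j hij) (by linarith)

end Stmt13

set_option maxHeartbeats 2000000 in
set_option synthInstance.maxHeartbeats 1000000 in
open scoped ENNReal in
/-- Every infinite-dimensional Banach space is finitely equivalent to a
Banach space of any prescribed infinite dimension `κ`; in particular it is finitely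
equivalent to a separable Banach space. -/
theorem exists_finitelyEquivalent_of_dim
    (X : Type u) [NormedAddCommGroup X] [NormedSpace ℝ X] [CompleteSpace X]
    (hinf : ¬ FiniteDimensional ℝ X) :
    (∀ κ : Cardinal.{u}, Cardinal.aleph0 ≤ κ →
      ∃ Y : BanachSpace.{u}, bdim Y.carrier = κ ∧ FinitelyEquivalent X Y.carrier) ∧
    (∃ Y : BanachSpace.{u}, TopologicalSpace.SeparableSpace Y.carrier ∧
      FinitelyEquivalent X Y.carrier) := by
  classical
  have main : ∀ κ : Cardinal.{u}, Cardinal.aleph0 ≤ κ →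
      ∃ Y : BanachSpace.{u}, (∃ G : Set Y.carrier, Cardinal.mk G ≤ κ ∧
          (Submodule.span ℝ G).topologicalClosure = ⊤) ∧
        bdim Y.carrier = κ ∧ FinitelyEquivalent X Y.carrier := by
    intro κ hκ
    haveI hι : Infinite κ.out := Cardinal.infinite_iff.2 (by rw [Cardinal.mk_out]; exact hκ)
    have hmkι : Cardinal.mk κ.out = κ := Cardinal.mk_out κ
    -- an ultrafilter on `κ.out → ℕ` containing all the "eventually different" sets
    set base : Set (Set (κ.out → ℕ)) :=
      {S | ∃ α β : κ.out, α ≠ β ∧ S = {s : κ.out → ℕ | s α ≠ s β}} with hbase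
    have hFIP : (Filter.generate base).NeBot := by
      rw [Filter.generate_neBot_iff]
      intro t hts htfin
      have hch := fun (S : Set (κ.out → ℕ)) (hS : S ∈ t) => hts hS
      choose! aS bS hab hSeq using hch
      set E : Set κ.out := ⋃ S ∈ t, {aS S, bS S} with hE
      have hEfin : E.Finite := htfin.biUnion fun S _ => (Set.finite_singleton _).insert _
      haveI : Countable ↥E := hEfin.countable
      obtain ⟨g, hg⟩ := Countable.exists_injective_nat ↥E
      refine ⟨fun x => if h : x ∈ E then g ⟨x, h⟩ else 0, Set.mem_sInter.2 fun S hS => ?_⟩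
      rw [hSeq S hS]
      have haE : aS S ∈ E := Set.mem_biUnion hS (by left; rfl)
      have hbE : bS S ∈ E := Set.mem_biUnion hS (by right; rfl)
      show (if h : aS S ∈ E then g ⟨aS S, h⟩ else 0) ≠
        (if h : bS S ∈ E then g ⟨bS S, h⟩ else 0)
      rw [dif_pos haE, dif_pos hbE]
      intro hEq
      exact hab S hS (congrArg Subtype.val (hg hEq))
    haveI := hFIP
    set 𝒰 : Ultrafilter (κ.out → ℕ) := Ultrafilter.of (Filter.generate base) with h𝒰def
    have hbase𝒰 : ∀ α β : κ.out, α ≠ β → {s : κ.out → ℕ | s α ≠ s β} ∈ 𝒰 := by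
      intro α β h
      exact Filter.le_def.1 (Ultrafilter.of_le _) _
        (Filter.mem_generate_of_mem (show _ ∈ base from ⟨α, β, h, rfl⟩))
    -- a separated sequence in X
    obtain ⟨R, e, hR1, heR, hsepe⟩ := exists_seq_norm_le_one_le_norm_sub (𝕜 := ℝ) (E := X) hinf
    have hymem : ∀ α : κ.out, Memℓp (fun s : κ.out → ℕ => e (s α)) (⊤ : ℝ≥0∞) := fun α =>
      memℓp_infty ⟨R, by rintro r ⟨s, rfl⟩; exact heR _⟩
    set yfam : κ.out → Stmt13.Ultra 𝒰 X := fun α =>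
      Submodule.Quotient.mk
        (⟨fun s => e (s α), hymem α⟩ : Stmt13.LInf (κ.out → ℕ) X) with hyfam
    have hynorm : ∀ α, ‖yfam α‖ ≤ R := by
      intro α
      refine le_trans (Submodule.Quotient.norm_mk_le _ _) ?_
      exact lp.norm_le_of_forall_le (by linarith) fun s => heR _
    have hysep : ∀ α β, α ≠ β → 1 ≤ ‖yfam α - yfam β‖ := by
      intro α β hαβ
      rw [hyfam]
      dsimp only
      rw [← Submodule.Quotient.mk_sub]
      have hconv := Stmt13.tendsto_norm_mk 𝒰 X
        ((⟨fun s => e (s α), hymem α⟩ : Stmt13.LInf (κ.out → ℕ) X) - ⟨fun s => e (s β), hymem β⟩)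
      refine ge_of_tendsto hconv ?_
      filter_upwards [hbase𝒰 α β hαβ] with s hs
      have heq : ‖((⟨fun s => e (s α), hymem α⟩ : Stmt13.LInf (κ.out → ℕ) X)
          - ⟨fun s => e (s β), hymem β⟩) s‖ = ‖e (s α) - e (s β)‖ := by
        rw [lp.coeFn_sub, Pi.sub_apply]
      rw [heq]
      exact hsepe hs
    -- countable locally universal families of tuples in X
    choose T hTc hTap using fun n => Stmt13.exists_countable_tuples (V := X) n
    set GW : Set (Stmt13.Ultra 𝒰 X) :=
      (⋃ n : ℕ, ⋃ t ∈ T n, Set.range (fun j : Fin n => Stmt13.diagL 𝒰 X (t j)))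
        ∪ Set.range yfam with hGW
    set Ysub : Submodule ℝ (Stmt13.Ultra 𝒰 X) :=
      (Submodule.span ℝ GW).topologicalClosure with hYsubdef
    have hYclosed : IsClosed (Ysub : Set (Stmt13.Ultra 𝒰 X)) :=
      Submodule.isClosed_topologicalClosure _
    haveI : CompleteSpace ↥Ysub := hYclosed.completeSpace_coe
    have hGWsub : GW ⊆ (Ysub : Set (Stmt13.Ultra 𝒰 X)) := fun w hw =>
      Submodule.le_topologicalClosure _ (Submodule.subset_span hw)
    set G : Set ↥Ysub := Subtype.val ⁻¹' GW with hG
    have himgG : Subtype.val '' G = GW := by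
      rw [hG]
      refine Set.image_preimage_eq_of_subset ?_
      rw [Subtype.range_coe]
      exact hGWsub
    have hGspan : (Submodule.span ℝ G).topologicalClosure = ⊤ := by
      rw [Submodule.eq_top_iff']
      intro y
      rw [← SetLike.mem_coe, Submodule.topologicalClosure_coe, closure_subtype]
      have hmapeq : (Subtype.val '' ((Submodule.span ℝ G : Submodule ℝ ↥Ysub) : Set ↥Ysub))
          = ((Submodule.span ℝ GW : Submodule ℝ (Stmt13.Ultra 𝒰 X)) : Set (Stmt13.Ultra 𝒰 X)) := by
        have h1 : Submodule.map Ysub.subtype (Submodule.span ℝ G) = Submodule.span ℝ GW := by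
          rw [Submodule.map_span,
            show (⇑Ysub.subtype '' G : Set (Stmt13.Ultra 𝒰 X)) = GW from himgG]
        calc Subtype.val '' ((Submodule.span ℝ G : Submodule ℝ ↥Ysub) : Set ↥Ysub)
            = ((Submodule.map Ysub.subtype (Submodule.span ℝ G) :
                Submodule ℝ (Stmt13.Ultra 𝒰 X)) : Set (Stmt13.Ultra 𝒰 X)) := by
              rw [Submodule.map_coe]; rfl
          _ = _ := by rw [h1]
      rw [hmapeq]
      rw [← Submodule.topologicalClosure_coe]
      exact y.2
    have hGcard : Cardinal.mk G ≤ κ := by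
      have h1 : Cardinal.mk G ≤ Cardinal.mk GW :=
        Cardinal.mk_preimage_of_injective _ _ Subtype.val_injective
      refine h1.trans ?_
      have hc1 : (⋃ n : ℕ, ⋃ t ∈ T n,
          Set.range (fun j : Fin n => Stmt13.diagL 𝒰 X (t j))).Countable :=
        Set.countable_iUnion fun n =>
          Set.Countable.biUnion (hTc n) fun t _ => Set.countable_range _
      calc Cardinal.mk GW
          ≤ Cardinal.mk (⋃ n : ℕ, ⋃ t ∈ T n,
              Set.range (fun j : Fin n => Stmt13.diagL 𝒰 X (t j)))
            + Cardinal.mk (Set.range yfam) := Cardinal.mk_union_le _ _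
        _ ≤ Cardinal.aleph0 + κ := by
            refine add_le_add ?_ ?_
            · haveI := hc1.to_subtype
              exact Cardinal.mk_le_aleph0
            · exact Cardinal.mk_range_le.trans (le_of_eq hmkι)
        _ ≤ κ + κ := add_le_add hκ le_rfl
        _ = κ := Cardinal.add_eq_self hκ
    refine ⟨⟨↥Ysub⟩, ⟨G, hGcard, hGspan⟩, ?_, ?_, ?_⟩
    · -- bdim = κ
      refine le_antisymm
        (le_trans (csInf_le (OrderBot.bddBelow _) ⟨G, rfl, hGspan⟩) hGcard) ?_
      refine le_csInf ⟨Cardinal.mk (Set.univ : Set ↥Ysub), Set.univ, rfl, ?_⟩ ?_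
      · rw [Submodule.span_univ]
        exact le_antisymm le_top (Submodule.le_topologicalClosure _)
      rintro c ⟨A, rfl, hAspan⟩
      set ysub : κ.out → ↥Ysub := fun α =>
        ⟨yfam α, hGWsub (Set.mem_union_right _ ⟨α, rfl⟩)⟩ with hysubdef
      have hysubnorm : ∀ α, ‖ysub α‖ ≤ R := fun α => by
        rw [Submodule.coe_norm]; exact hynorm α
      have hysubsep : ∀ α β, α ≠ β → 1 ≤ ‖ysub α - ysub β‖ := fun α β h => by
        rw [Submodule.coe_norm]
        exact hysep α β h
      obtain ⟨D, hDcl, hDcard⟩ := Stmt13.exists_dense_card A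
      have hdense : ∀ z : ↥Ysub, z ∈ closure D := by
        intro z
        have hz : z ∈ (((Submodule.span ℝ A).topologicalClosure :
            Submodule ℝ ↥Ysub) : Set ↥Ysub) := by
          rw [hAspan]; trivial
        rw [Submodule.topologicalClosure_coe] at hz
        exact closure_minimal hDcl isClosed_closure hz
      choose d hd1 hd2 using fun α : κ.out =>
        Metric.mem_closure_iff.1 (hdense (ysub α)) (1/2) (by norm_num)
      have hinj : Function.Injective (fun α : κ.out => (⟨d α, hd1 α⟩ : ↥D)) := by
        intro α β hEq
        by_contra hne
        have hdd : d α = d β := congrArg Subtype.val hEq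
        have h1 := hd2 α
        have h2 := hd2 β
        rw [hdd] at h1
        have htri := dist_triangle_right (ysub α) (ysub β) (d β)
        have hge := hysubsep α β hne
        replace hge : 1 ≤ dist (ysub α) (ysub β) := hge.trans_eq (dist_eq_norm _ _).symm
        linarith
      have hκD : κ ≤ Cardinal.mk D :=
        le_trans (le_of_eq hmkι.symm) (Cardinal.mk_le_of_injective hinj)
      have hκA : κ ≤ max (Cardinal.mk A) Cardinal.aleph0 := hκD.trans hDcard
      rcases le_or_gt Cardinal.aleph0 (Cardinal.mk A) with hA0 | hA0
      · rwa [max_eq_left hA0] at hκA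
      exfalso
      have hAfin : A.Finite :=
        Set.finite_coe_iff.1 (Cardinal.lt_aleph0_iff_finite.1 hA0)
      haveI : FiniteDimensional ℝ (Submodule.span ℝ A) :=
        FiniteDimensional.span_of_finite ℝ hAfin
      have hclosed : IsClosed ((Submodule.span ℝ A : Submodule ℝ ↥Ysub) : Set ↥Ysub) :=
        Submodule.closed_of_finiteDimensional _
      have hspanTop : Submodule.span ℝ A = (⊤ : Submodule ℝ ↥Ysub) := by
        refine le_antisymm le_top ?_
        rw [← hAspan]
        exact Submodule.topologicalClosure_minimal _ le_rfl hclosed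
      haveI hfin1 : FiniteDimensional ℝ (⊤ : Submodule ℝ ↥Ysub) := hspanTop ▸ inferInstance
      haveI hfin2 : FiniteDimensional ℝ ↥Ysub :=
        Module.Finite.equiv (Submodule.topEquiv (R := ℝ) (M := ↥Ysub))
      exact Stmt13.not_finiteDim_of_separated ysub hysubnorm hysubsep hfin2
    · -- X is finitely representable in Ysub
      intro ε hε A hA
      haveI : FiniteDimensional ℝ A := hA
      set n := Module.finrank ℝ A with hn
      set b : Module.Basis (Fin n) ℝ A := Module.finBasis ℝ A with hb
      obtain ⟨c, hc, hlow⟩ := Stmt13.exists_basis_lower_bound A b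
      obtain ⟨t, htT, htclose⟩ := hTap n (fun j => (b j : X)) (c * ε / (ε + 3)) (by positivity)
      have hmemY : ∀ j : Fin n, Stmt13.diagL 𝒰 X (t j) ∈ Ysub := fun j =>
        hGWsub (Set.mem_union_left _ (Set.mem_iUnion.2 ⟨n, Set.mem_biUnion htT ⟨j, rfl⟩⟩))
      refine Stmt13.embed_of_close A b
        (fun j => (⟨Stmt13.diagL 𝒰 X (t j), hmemY j⟩ : ↥Ysub)) hε hc hlow ?_
      intro a ha
      have h1 : ‖∑ j, a j • (⟨Stmt13.diagL 𝒰 X (t j), hmemY j⟩ : ↥Ysub)‖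
          = ‖∑ j, a j • t j‖ := by
        rw [Submodule.coe_norm, Stmt13.submodule_coe_sum_smul]
        have h2 : (∑ j, a j • (Stmt13.diagL 𝒰 X (t j)))
            = Stmt13.diagL 𝒰 X (∑ j, a j • t j) := by
          rw [map_sum]
          exact Finset.sum_congr rfl fun j _ => by rw [map_smul]
        rw [show (∑ j, a j • ((⟨Stmt13.diagL 𝒰 X (t j), hmemY j⟩ : ↥Ysub) :
            Stmt13.Ultra 𝒰 X)) = ∑ j, a j • (Stmt13.diagL 𝒰 X (t j)) from rfl,
          h2, Stmt13.norm_diagL]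
      have h2 : ‖(∑ j, a j • b j : A)‖ = ‖∑ j, a j • (b j : X)‖ := by
        rw [Submodule.coe_norm, Stmt13.submodule_coe_sum_smul]
      rw [h1, h2]
      exact htclose a ha
    · -- Ysub is finitely representable in X
      refine Stmt13.finrep_of_isometry Ysub.subtype (fun z => ?_) (Stmt13.ultra_finrep 𝒰 X)
      rw [Submodule.subtype_apply]
      exact (Submodule.coe_norm z).symm
  constructor
  · intro κ hκ
    obtain ⟨Y, _, h2, h3⟩ := main κ hκ
    exact ⟨Y, h2, h3⟩
  · obtain ⟨Y, ⟨G, hGcard, hGspan⟩, _, heq⟩ := main Cardinal.aleph0 le_rfl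
    refine ⟨Y, ?_, heq⟩
    obtain ⟨D, hDcl, hDcard⟩ := Stmt13.exists_dense_card G
    have hDc : D.Countable := by
      rw [← Set.countable_coe_iff, ← Cardinal.mk_le_aleph0_iff]
      exact hDcard.trans (max_le hGcard le_rfl)
    refine ⟨⟨D, hDc, ?_⟩⟩
    intro z
    have hz : z ∈ (((Submodule.span ℝ G).topologicalClosure :
        Submodule ℝ Y.carrier) : Set Y.carrier) := by
      rw [hGspan]; trivial
    rw [Submodule.topologicalClosure_coe] at hz
    exact closure_minimal hDcl isClosed_closure hz
end
end

section
/- Let X be a finite-dimensional real Banach space and let m < dim X. Then H_m(X), the set of isometry classes of m-dimensional subspaces of X equipped with the Banach–Mazur metric log d, is a compact, connected metric space. -/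
noncomputable section

universe u

/-- A norm on `ℝ^n`. An `n`-dimensional real Banach space is (isometric to) `ℝ^n`
equipped with such a norm. -/
structure MNorm (n : ℕ) : Type where
  toFun : (Fin n → ℝ) → ℝ
  add_le' : ∀ x y, toFun (x + y) ≤ toFun x + toFun y
  smul_eq' : ∀ (a : ℝ) (x), toFun (a • x) = |a| * toFun x
  eq_zero' : ∀ x, toFun x = 0 → x = 0

/-- Two norms on `ℝ^n` are identified when they are linearly isometrically equivalent. -/
def mnormSetoid (n : ℕ) : Setoid (MNorm n) where
  r N₁ N₂ := ∃ e : (Fin n → ℝ) ≃ₗ[ℝ] (Fin n → ℝ), ∀ x, N₂.toFun (e x) = N₁.toFun x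
  iseqv := by
    constructor
    · exact fun N => ⟨LinearEquiv.refl ℝ _, fun x => rfl⟩
    · rintro N₁ N₂ ⟨e, he⟩
      refine ⟨e.symm, fun x => ?_⟩
      have h := he (e.symm x)
      rw [e.apply_symm_apply] at h
      exact h.symm
    · rintro N₁ N₂ N₃ ⟨e, he⟩ ⟨f, hf⟩
      exact ⟨e.trans f, fun x => by
        rw [LinearEquiv.trans_apply, hf, he]⟩

/-- The Minkowski compact `𝔐_n`: isometry classes of `n`-dimensional real Banach spaces. -/
def Mink (n : ℕ) : Type := Quotient (mnormSetoid n)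

/-- The Minkowski space `𝔐`: the disjoint union of the `𝔐_n`. -/
def MinkSpace : Type := Σ n : ℕ, Mink n

/-- The operator norm of a linear map `u : (ℝ^n, N₁) → (ℝ^n, N₂)`. -/
noncomputable def opC (n : ℕ) (N₁ N₂ : MNorm n)
    (u : (Fin n → ℝ) →ₗ[ℝ] (Fin n → ℝ)) : ℝ :=
  sInf {C : ℝ | 0 ≤ C ∧ ∀ x, N₂.toFun (u x) ≤ C * N₁.toFun x}

/-- The multiplicative Banach–Mazur distance between two norms on `ℝ^n`:
`inf {‖u‖·‖u⁻¹‖ : u a linear isomorphism}`. -/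
noncomputable def mDist (n : ℕ) (N₁ N₂ : MNorm n) : ℝ :=
  sInf {c : ℝ | ∃ u : (Fin n → ℝ) ≃ₗ[ℝ] (Fin n → ℝ),
    c = opC n N₁ N₂ u.toLinearMap * opC n N₂ N₁ u.symm.toLinearMap}

/-- The Banach–Mazur metric `log d` on `𝔐_n`. -/
noncomputable def minkDist (n : ℕ) (P Q : Mink n) : ℝ :=
  Real.log (mDist n P.out Q.out)

/-- The topology of the Banach–Mazur metric on `𝔐_n` (generated by its open balls). -/
instance minkTopology (n : ℕ) : TopologicalSpace (Mink n) :=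
  TopologicalSpace.generateFrom
    {s : Set (Mink n) | ∃ (P : Mink n) (ε : ℝ), 0 < ε ∧ s = {Q | minkDist n P Q < ε}}

instance : TopologicalSpace MinkSpace := by
  unfold MinkSpace; infer_instance

/-- The class in `𝔐` determined by a norm on `ℝ^n`. -/
def minkClass {n : ℕ} (N : MNorm n) : MinkSpace := ⟨n, Quotient.mk (mnormSetoid n) N⟩

/-- `H(X) ⊆ 𝔐`: the set of isometry classes of finite-dimensional subspaces of `X`.
A class `c` belongs to `H(X)` iff `ℝ^{c.1}` with (a representative of) the norm class `c.2`
embeds linearly isometrically into `X`. -/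
def HSet (X : Type u) [SeminormedAddCommGroup X] [NormedSpace ℝ X] : Set MinkSpace :=
  {c : MinkSpace | ∃ f : (Fin c.1 → ℝ) →ₗ[ℝ] X, Function.Injective f ∧
    ∀ v, ‖f v‖ = (Quotient.out c.2).toFun v}

/-- `H_m(X) ⊆ 𝔐_m`: the set of isometry classes of `m`-dimensional subspaces of `X`. -/
def HmSet (m : ℕ) (X : Type u) [SeminormedAddCommGroup X] [NormedSpace ℝ X] : Set (Mink m) :=
  {P : Mink m | ∃ f : (Fin m → ℝ) →ₗ[ℝ] X, Function.Injective f ∧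
    ∀ v, ‖f v‖ = (Quotient.out P).toFun v}

lemma MNorm.zero {n : ℕ} (N : MNorm n) : N.toFun 0 = 0 := by
  have := N.smul_eq' 0 0
  simpa using this

lemma MNorm.neg_eq {n : ℕ} (N : MNorm n) (x : Fin n → ℝ) : N.toFun (-x) = N.toFun x := by
  have := N.smul_eq' (-1) x
  simpa using this

lemma MNorm.nonneg {n : ℕ} (N : MNorm n) (x : Fin n → ℝ) : 0 ≤ N.toFun x := by
  have h := N.add_le' x (-x)
  simp [MNorm.zero, MNorm.neg_eq] at h
  linarith [h]

lemma MNorm.pos {n : ℕ} (N : MNorm n) {x : Fin n → ℝ} (hx : x ≠ 0) : 0 < N.toFun x := by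
  rcases lt_or_eq_of_le (N.nonneg x) with h | h
  · exact h
  · exact absurd (N.eq_zero' x h.symm) hx

lemma MNorm.sum_le {n : ℕ} (N : MNorm n) {ι : Type*} (s : Finset ι) (f : ι → Fin n → ℝ) :
    N.toFun (∑ i ∈ s, f i) ≤ ∑ i ∈ s, N.toFun (f i) := by
  classical
  induction s using Finset.induction with
  | empty => simp [MNorm.zero]
  | @insert a s ha ih =>
    rw [Finset.sum_insert ha, Finset.sum_insert ha]
    exact le_trans (N.add_le' _ _) (by linarith [ih])

/-- Upper bound: `N x ≤ b * ‖x‖` with `b = ∑ N(eᵢ)`. -/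
lemma MNorm.le_const_mul {n : ℕ} (N : MNorm n) (x : Fin n → ℝ) :
    N.toFun x ≤ (∑ i, N.toFun (Pi.single i 1)) * ‖x‖ := by
  classical
  have hx : x = ∑ i, x i • (Pi.single i 1 : Fin n → ℝ) := by
    ext j
    simp [Pi.single_apply]
  calc N.toFun x = N.toFun (∑ i, x i • (Pi.single i 1 : Fin n → ℝ)) := by rw [← hx]
    _ ≤ ∑ i, N.toFun (x i • (Pi.single i 1 : Fin n → ℝ)) := MNorm.sum_le N _ _
    _ = ∑ i, |x i| * N.toFun (Pi.single i 1) := by simp [N.smul_eq']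
    _ ≤ ∑ i, ‖x‖ * N.toFun (Pi.single i 1) := by
        refine Finset.sum_le_sum fun i _ => ?_
        exact mul_le_mul_of_nonneg_right (by simpa using norm_le_pi_norm x i) (N.nonneg _)
    _ = (∑ i, N.toFun (Pi.single i 1)) * ‖x‖ := by
        rw [Finset.sum_mul]; exact Finset.sum_congr rfl fun i _ => mul_comm _ _

lemma MNorm.sub_le {n : ℕ} (N : MNorm n) (x y : Fin n → ℝ) :
    N.toFun x - N.toFun y ≤ N.toFun (x - y) := by
  have := N.add_le' (x - y) y
  simp at this
  linarith

lemma MNorm.continuous {n : ℕ} (N : MNorm n) : Continuous N.toFun := by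
  set b := ∑ i, N.toFun (Pi.single i 1) with hb
  have hb0 : 0 ≤ b := Finset.sum_nonneg fun i _ => N.nonneg _
  have hlip : LipschitzWith (Real.toNNReal b) N.toFun := by
    refine LipschitzWith.of_dist_le_mul fun x y => ?_
    have h1 : N.toFun x - N.toFun y ≤ N.toFun (x - y) := N.sub_le x y
    have h2 : N.toFun y - N.toFun x ≤ N.toFun (x - y) := by
      have := N.sub_le y x
      rwa [← MNorm.neg_eq N (y - x), neg_sub] at this
    have h3 : N.toFun (x - y) ≤ b * ‖x - y‖ := N.le_const_mul _
    have hcoe : ((Real.toNNReal b) : ℝ) = b := Real.coe_toNNReal b hb0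
    rw [Real.dist_eq, dist_eq_norm, hcoe, abs_sub_le_iff]
    exact ⟨by linarith, by linarith⟩
  exact hlip.continuous

/-- Lower bound: for `n ≥ 1` there is `c > 0` with `c * ‖x‖ ≤ N x`. -/
lemma MNorm.exists_pos_le {n : ℕ} (N : MNorm n) (hn : 0 < n) :
    ∃ c : ℝ, 0 < c ∧ ∀ x, c * ‖x‖ ≤ N.toFun x := by
  have : NeZero n := ⟨hn.ne'⟩
  have hS : (Metric.sphere (0 : Fin n → ℝ) 1).Nonempty :=
    NormedSpace.sphere_nonempty.2 zero_le_one
  obtain ⟨x₀, hx₀S, hmin⟩ :=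
    (isCompact_sphere (0 : Fin n → ℝ) 1).exists_isMinOn hS (N.continuous.continuousOn)
  have hx₀ : x₀ ≠ 0 := by
    intro h
    rw [h] at hx₀S
    simp at hx₀S
  refine ⟨N.toFun x₀, N.pos hx₀, fun x => ?_⟩
  rcases eq_or_ne x 0 with rfl | hx
  · simp [MNorm.zero]
  · have hxn : ‖x‖ ≠ 0 := norm_ne_zero_iff.2 hx
    have hxpos : (0:ℝ) < ‖x‖ := (norm_nonneg x).lt_of_ne' hxn
    have hmem : (‖x‖⁻¹ • x) ∈ Metric.sphere (0 : Fin n → ℝ) 1 := by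
      simp [norm_smul, abs_of_nonneg (norm_nonneg x), inv_mul_cancel₀ hxn]
    have hle : N.toFun x₀ ≤ N.toFun (‖x‖⁻¹ • x) := hmin hmem
    have h2 : N.toFun (‖x‖⁻¹ • x) = ‖x‖⁻¹ * N.toFun x := by
      rw [N.smul_eq', abs_of_nonneg (by positivity)]
    rw [h2, inv_mul_eq_div, le_div_iff₀ hxpos] at hle
    linarith
/-! ### Operator norm lemmas -/

def opSet (n : ℕ) (N₁ N₂ : MNorm n) (u : (Fin n → ℝ) →ₗ[ℝ] (Fin n → ℝ)) : Set ℝ :=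
  {C : ℝ | 0 ≤ C ∧ ∀ x, N₂.toFun (u x) ≤ C * N₁.toFun x}

lemma opC_eq_sInf (n : ℕ) (N₁ N₂ : MNorm n) (u : (Fin n → ℝ) →ₗ[ℝ] (Fin n → ℝ)) :
    opC n N₁ N₂ u = sInf (opSet n N₁ N₂ u) := rfl

lemma opSet_nonempty (n : ℕ) (N₁ N₂ : MNorm n) (u : (Fin n → ℝ) →ₗ[ℝ] (Fin n → ℝ)) :
    (opSet n N₁ N₂ u).Nonempty := by
  rcases Nat.eq_zero_or_pos n with rfl | hn
  · refine ⟨0, le_refl 0, fun x => ?_⟩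
    have hx : x = 0 := Subsingleton.elim x 0
    have hx' : u x = 0 := by rw [hx, map_zero]
    rw [hx', hx, MNorm.zero, MNorm.zero, zero_mul]
  · obtain ⟨c, hc, hcle⟩ := N₁.exists_pos_le hn
    set b := ∑ i, N₂.toFun (u (Pi.single i 1)) with hb
    have hb0 : 0 ≤ b := Finset.sum_nonneg fun i _ => N₂.nonneg _
    refine ⟨b / c, by positivity, fun x => ?_⟩
    have h1 : N₂.toFun (u x) ≤ b * ‖x‖ := by
      classical
      have hx : x = ∑ i, x i • (Pi.single i 1 : Fin n → ℝ) := by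
        ext j; simp [Pi.single_apply]
      calc N₂.toFun (u x) = N₂.toFun (∑ i, x i • u (Pi.single i 1)) := by
            conv_lhs => rw [hx, map_sum]
            simp_rw [map_smul]
        _ ≤ ∑ i, N₂.toFun (x i • u (Pi.single i 1)) := MNorm.sum_le N₂ _ _
        _ = ∑ i, |x i| * N₂.toFun (u (Pi.single i 1)) := by simp [N₂.smul_eq']
        _ ≤ ∑ i, ‖x‖ * N₂.toFun (u (Pi.single i 1)) := by
            refine Finset.sum_le_sum fun i _ => ?_
            exact mul_le_mul_of_nonneg_right (by simpa using norm_le_pi_norm x i) (N₂.nonneg _)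
        _ = b * ‖x‖ := by
            rw [hb, Finset.sum_mul]
            exact Finset.sum_congr rfl fun i _ => mul_comm _ _
    have h2 : c * ‖x‖ ≤ N₁.toFun x := hcle x
    calc N₂.toFun (u x) ≤ b * ‖x‖ := h1
      _ = (b / c) * (c * ‖x‖) := by field_simp
      _ ≤ (b / c) * N₁.toFun x := by
          exact mul_le_mul_of_nonneg_left h2 (by positivity)

lemma opC_nonneg (n : ℕ) (N₁ N₂ : MNorm n) (u : (Fin n → ℝ) →ₗ[ℝ] (Fin n → ℝ)) :
    0 ≤ opC n N₁ N₂ u :=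
  le_csInf (opSet_nonempty n N₁ N₂ u) fun _ hC => hC.1

lemma opSet_bddBelow (n : ℕ) (N₁ N₂ : MNorm n) (u : (Fin n → ℝ) →ₗ[ℝ] (Fin n → ℝ)) :
    BddBelow (opSet n N₁ N₂ u) := ⟨0, fun _ hC => hC.1⟩

lemma opC_le (n : ℕ) (N₁ N₂ : MNorm n) (u : (Fin n → ℝ) →ₗ[ℝ] (Fin n → ℝ))
    {C : ℝ} (h0 : 0 ≤ C) (h : ∀ x, N₂.toFun (u x) ≤ C * N₁.toFun x) :
    opC n N₁ N₂ u ≤ C :=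
  csInf_le (opSet_bddBelow n N₁ N₂ u) ⟨h0, h⟩

/-- The fundamental property: the operator norm is itself a valid bound. -/
lemma opC_spec (n : ℕ) (N₁ N₂ : MNorm n) (u : (Fin n → ℝ) →ₗ[ℝ] (Fin n → ℝ)) (x : Fin n → ℝ) :
    N₂.toFun (u x) ≤ opC n N₁ N₂ u * N₁.toFun x := by
  rcases eq_or_ne x 0 with rfl | hx
  · rw [map_zero, MNorm.zero, MNorm.zero, mul_zero]
  · have hpos : 0 < N₁.toFun x := N₁.pos hx
    rw [opC_eq_sInf, ← div_le_iff₀ hpos]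
    exact le_csInf (opSet_nonempty n N₁ N₂ u) fun C hC => (div_le_iff₀ hpos).2 (hC.2 x)
/-! ### Banach–Mazur distance lemmas -/

def mDistSet (n : ℕ) (N₁ N₂ : MNorm n) : Set ℝ :=
  {c : ℝ | ∃ u : (Fin n → ℝ) ≃ₗ[ℝ] (Fin n → ℝ),
    c = opC n N₁ N₂ u.toLinearMap * opC n N₂ N₁ u.symm.toLinearMap}

lemma mDist_eq_sInf (n : ℕ) (N₁ N₂ : MNorm n) : mDist n N₁ N₂ = sInf (mDistSet n N₁ N₂) := rfl

lemma mDistSet_nonempty (n : ℕ) (N₁ N₂ : MNorm n) : (mDistSet n N₁ N₂).Nonempty :=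
  ⟨_, LinearEquiv.refl ℝ _, rfl⟩

lemma mDistSet_one_le (n : ℕ) (hn : 0 < n) (N₁ N₂ : MNorm n) {c : ℝ}
    (hc : c ∈ mDistSet n N₁ N₂) : 1 ≤ c := by
  obtain ⟨u, rfl⟩ := hc
  set x₀ : Fin n → ℝ := Pi.single ⟨0, hn⟩ 1 with hx₀
  have hx₀ne : x₀ ≠ 0 := by
    intro h
    have := congrFun h ⟨0, hn⟩
    simp [hx₀] at this
  have h1 : N₁.toFun x₀ ≤ opC n N₂ N₁ u.symm.toLinearMap * N₂.toFun (u x₀) := by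
    have := opC_spec n N₂ N₁ u.symm.toLinearMap (u x₀)
    simpa using this
  have h2 : N₂.toFun (u x₀) ≤ opC n N₁ N₂ u.toLinearMap * N₁.toFun x₀ :=
    opC_spec n N₁ N₂ u.toLinearMap x₀
  have hpos : 0 < N₁.toFun x₀ := N₁.pos hx₀ne
  have h3 : N₁.toFun x₀ ≤ (opC n N₁ N₂ u.toLinearMap * opC n N₂ N₁ u.symm.toLinearMap) * N₁.toFun x₀ := by
    calc N₁.toFun x₀ ≤ opC n N₂ N₁ u.symm.toLinearMap * N₂.toFun (u x₀) := h1
      _ ≤ opC n N₂ N₁ u.symm.toLinearMap * (opC n N₁ N₂ u.toLinearMap * N₁.toFun x₀) :=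
          mul_le_mul_of_nonneg_left h2 (opC_nonneg _ _ _ _)
      _ = (opC n N₁ N₂ u.toLinearMap * opC n N₂ N₁ u.symm.toLinearMap) * N₁.toFun x₀ := by ring
  nlinarith

lemma one_le_mDist (n : ℕ) (hn : 0 < n) (N₁ N₂ : MNorm n) : 1 ≤ mDist n N₁ N₂ :=
  le_csInf (mDistSet_nonempty n N₁ N₂) fun _ hc => mDistSet_one_le n hn N₁ N₂ hc

lemma mDist_pos (n : ℕ) (hn : 0 < n) (N₁ N₂ : MNorm n) : 0 < mDist n N₁ N₂ :=
  lt_of_lt_of_le one_pos (one_le_mDist n hn N₁ N₂)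

lemma mDist_le (n : ℕ) (N₁ N₂ : MNorm n) (u : (Fin n → ℝ) ≃ₗ[ℝ] (Fin n → ℝ)) :
    mDist n N₁ N₂ ≤ opC n N₁ N₂ u.toLinearMap * opC n N₂ N₁ u.symm.toLinearMap :=
  csInf_le ⟨0, fun c hc => by
    obtain ⟨v, rfl⟩ := hc
    exact mul_nonneg (opC_nonneg _ _ _ _) (opC_nonneg _ _ _ _)⟩ ⟨u, rfl⟩

lemma opC_comp_le (n : ℕ) (N₁ N₂ N₃ : MNorm n)
    (u v : (Fin n → ℝ) →ₗ[ℝ] (Fin n → ℝ)) :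
    opC n N₁ N₃ (v ∘ₗ u) ≤ opC n N₂ N₃ v * opC n N₁ N₂ u := by
  refine opC_le n N₁ N₃ _ (mul_nonneg (opC_nonneg _ _ _ _) (opC_nonneg _ _ _ _)) fun x => ?_
  calc N₃.toFun ((v ∘ₗ u) x) = N₃.toFun (v (u x)) := rfl
    _ ≤ opC n N₂ N₃ v * N₂.toFun (u x) := opC_spec _ _ _ _ _
    _ ≤ opC n N₂ N₃ v * (opC n N₁ N₂ u * N₁.toFun x) :=
        mul_le_mul_of_nonneg_left (opC_spec _ _ _ _ _) (opC_nonneg _ _ _ _)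
    _ = opC n N₂ N₃ v * opC n N₁ N₂ u * N₁.toFun x := by ring

/-- Submultiplicativity (the multiplicative triangle inequality). -/
lemma mDist_triangle_mul (n : ℕ) (hn : 0 < n) (N₁ N₂ N₃ : MNorm n) :
    mDist n N₁ N₃ ≤ mDist n N₁ N₂ * mDist n N₂ N₃ := by
  have key : ∀ c₁ ∈ mDistSet n N₁ N₂, ∀ c₂ ∈ mDistSet n N₂ N₃,
      mDist n N₁ N₃ ≤ c₁ * c₂ := by
    rintro c₁ ⟨u, rfl⟩ c₂ ⟨v, rfl⟩
    have h := mDist_le n N₁ N₃ (u.trans v)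
    have e1 : (u.trans v).toLinearMap = v.toLinearMap ∘ₗ u.toLinearMap := rfl
    have e2 : (u.trans v).symm.toLinearMap = u.symm.toLinearMap ∘ₗ v.symm.toLinearMap := rfl
    have h1 := opC_comp_le n N₁ N₂ N₃ u.toLinearMap v.toLinearMap
    have h2 := opC_comp_le n N₃ N₂ N₁ v.symm.toLinearMap u.symm.toLinearMap
    rw [e1, e2] at h
    have := mul_le_mul h1 h2 (opC_nonneg _ _ _ _) (mul_nonneg (opC_nonneg _ _ _ _) (opC_nonneg _ _ _ _))
    calc mDist n N₁ N₃ ≤ _ := h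
      _ ≤ (opC n N₂ N₃ v.toLinearMap * opC n N₁ N₂ u.toLinearMap) *
          (opC n N₂ N₁ u.symm.toLinearMap * opC n N₃ N₂ v.symm.toLinearMap) := this
      _ = (opC n N₁ N₂ u.toLinearMap * opC n N₂ N₁ u.symm.toLinearMap) *
          (opC n N₂ N₃ v.toLinearMap * opC n N₃ N₂ v.symm.toLinearMap) := by ring
  -- now pass to infima
  have h12 : 0 < mDist n N₁ N₂ := mDist_pos n hn N₁ N₂
  have h23 : 0 < mDist n N₂ N₃ := mDist_pos n hn N₂ N₃
  have step1 : ∀ c₁ ∈ mDistSet n N₁ N₂, mDist n N₁ N₃ ≤ c₁ * mDist n N₂ N₃ := by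
    intro c₁ hc₁
    have hc₁pos : 0 < c₁ := lt_of_lt_of_le one_pos (mDistSet_one_le n hn N₁ N₂ hc₁)
    rw [mul_comm, ← div_le_iff₀ hc₁pos] at *
    exact le_csInf (mDistSet_nonempty n N₂ N₃) fun c₂ hc₂ => by
      rw [div_le_iff₀ hc₁pos]
      have := key c₁ hc₁ c₂ hc₂
      linarith [this]
  rw [← div_le_iff₀ h23]
  exact le_csInf (mDistSet_nonempty n N₁ N₂) fun c₁ hc₁ => by
    rw [div_le_iff₀ h23]
    exact step1 c₁ hc₁
/-! ### Invariance of `mDist` under the setoid, and `minkDist` facts -/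

lemma opC_congr (n : ℕ) {N₁ N₂ N₁' N₂' : MNorm n}
    (e₁ e₂ : (Fin n → ℝ) ≃ₗ[ℝ] (Fin n → ℝ))
    (h₁ : ∀ x, N₁'.toFun (e₁ x) = N₁.toFun x) (h₂ : ∀ x, N₂'.toFun (e₂ x) = N₂.toFun x)
    (u : (Fin n → ℝ) →ₗ[ℝ] (Fin n → ℝ)) :
    opC n N₁' N₂' (e₂.toLinearMap ∘ₗ u ∘ₗ e₁.symm.toLinearMap) = opC n N₁ N₂ u := by
  rw [opC_eq_sInf, opC_eq_sInf]
  congr 1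
  ext C
  constructor
  · rintro ⟨hC0, hC⟩
    refine ⟨hC0, fun z => ?_⟩
    have := hC (e₁ z)
    simp only [LinearMap.coe_comp, Function.comp_apply, LinearEquiv.coe_coe] at this
    rw [e₁.symm_apply_apply, h₂, h₁] at this
    exact this
  · rintro ⟨hC0, hC⟩
    refine ⟨hC0, fun x => ?_⟩
    have := hC (e₁.symm x)
    simp only [LinearMap.coe_comp, Function.comp_apply, LinearEquiv.coe_coe]
    rw [h₂]
    have hx : N₁'.toFun x = N₁.toFun (e₁.symm x) := by
      conv_lhs => rw [← e₁.apply_symm_apply x]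
      rw [h₁]
    rw [hx]
    exact this

lemma mDistSet_congr (n : ℕ) {N₁ N₂ N₁' N₂' : MNorm n}
    (h₁ : (mnormSetoid n).r N₁ N₁') (h₂ : (mnormSetoid n).r N₂ N₂') :
    mDistSet n N₁ N₂ = mDistSet n N₁' N₂' := by
  obtain ⟨e₁, he₁⟩ := h₁
  obtain ⟨e₂, he₂⟩ := h₂
  ext c
  constructor
  · rintro ⟨u, rfl⟩
    refine ⟨(e₁.symm.trans u).trans e₂, ?_⟩
    have ha : ((e₁.symm.trans u).trans e₂).toLinearMap
        = e₂.toLinearMap ∘ₗ u.toLinearMap ∘ₗ e₁.symm.toLinearMap := rfl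
    have hb : ((e₁.symm.trans u).trans e₂).symm.toLinearMap
        = e₁.toLinearMap ∘ₗ u.symm.toLinearMap ∘ₗ e₂.symm.toLinearMap := rfl
    rw [ha, hb, opC_congr n e₁ e₂ he₁ he₂ u.toLinearMap,
      opC_congr n e₂ e₁ he₂ he₁ u.symm.toLinearMap]
  · rintro ⟨u, rfl⟩
    refine ⟨(e₁.trans u).trans e₂.symm, ?_⟩
    have he₁' : ∀ x, N₁.toFun (e₁.symm x) = N₁'.toFun x := by
      intro x
      conv_rhs => rw [← e₁.apply_symm_apply x, he₁]
    have he₂' : ∀ x, N₂.toFun (e₂.symm x) = N₂'.toFun x := by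
      intro x
      conv_rhs => rw [← e₂.apply_symm_apply x, he₂]
    have ha : ((e₁.trans u).trans e₂.symm).toLinearMap
        = e₂.symm.toLinearMap ∘ₗ u.toLinearMap ∘ₗ (e₁.symm).symm.toLinearMap := rfl
    have hb : ((e₁.trans u).trans e₂.symm).symm.toLinearMap
        = e₁.symm.toLinearMap ∘ₗ u.symm.toLinearMap ∘ₗ (e₂.symm).symm.toLinearMap := rfl
    rw [ha, hb, opC_congr n e₁.symm e₂.symm he₁' he₂' u.toLinearMap,
      opC_congr n e₂.symm e₁.symm he₂' he₁' u.symm.toLinearMap]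

lemma mDist_congr (n : ℕ) {N₁ N₂ N₁' N₂' : MNorm n}
    (h₁ : (mnormSetoid n).r N₁ N₁') (h₂ : (mnormSetoid n).r N₂ N₂') :
    mDist n N₁ N₂ = mDist n N₁' N₂' := by
  rw [mDist_eq_sInf, mDist_eq_sInf, mDistSet_congr n h₁ h₂]

lemma minkDist_eq_log (m : ℕ) (P Q : Mink m) (N₁ N₂ : MNorm m)
    (h₁ : Quotient.mk (mnormSetoid m) N₁ = P) (h₂ : Quotient.mk (mnormSetoid m) N₂ = Q) :
    minkDist m P Q = Real.log (mDist m N₁ N₂) := by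
  have e₁ : (mnormSetoid m).r P.out N₁ := Quotient.exact (by exact (Quotient.out_eq (s := mnormSetoid m) P).trans h₁.symm)
  have e₂ : (mnormSetoid m).r Q.out N₂ := Quotient.exact (by exact (Quotient.out_eq (s := mnormSetoid m) Q).trans h₂.symm)
  unfold minkDist
  rw [mDist_congr m e₁ e₂]

lemma minkDist_triangle (m : ℕ) (hm : 0 < m) (P Q R : Mink m) :
    minkDist m P R ≤ minkDist m P Q + minkDist m Q R := by
  unfold minkDist
  have h := mDist_triangle_mul m hm P.out Q.out R.out
  calc Real.log (mDist m P.out R.out)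
      ≤ Real.log (mDist m P.out Q.out * mDist m Q.out R.out) := by
        apply Real.log_le_log (mDist_pos m hm _ _) h
    _ = Real.log (mDist m P.out Q.out) + Real.log (mDist m Q.out R.out) := by
        rw [Real.log_mul (mDist_pos m hm _ _).ne' (mDist_pos m hm _ _).ne']
/-! ### Norms from linearly independent tuples -/

section Tuple

variable {X : Type u} [NormedAddCommGroup X] [NormedSpace ℝ X] {m : ℕ}

/-- The linear map `ℝ^m → X` determined by a tuple of vectors. -/
def tupleMap (a : Fin m → X) : (Fin m → ℝ) →ₗ[ℝ] X :=
  Fintype.linearCombination ℝ a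

lemma tupleMap_apply (a : Fin m → X) (v : Fin m → ℝ) :
    tupleMap a v = ∑ i, v i • a i := by
  simp [tupleMap, Fintype.linearCombination_apply]

lemma tupleMap_injective {a : Fin m → X} (h : LinearIndependent ℝ a) :
    Function.Injective (tupleMap a) := by
  rw [← LinearMap.ker_eq_bot, LinearMap.ker_eq_bot']
  intro v hv
  rw [tupleMap_apply] at hv
  funext i
  exact Fintype.linearIndependent_iff.1 h v hv i

/-- The `MNorm` induced by a linearly independent tuple. -/
def tupleNorm (a : Fin m → X) (h : LinearIndependent ℝ a) : MNorm m where
  toFun v := ‖tupleMap a v‖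
  add_le' x y := by
    show ‖tupleMap a (x + y)‖ ≤ ‖tupleMap a x‖ + ‖tupleMap a y‖
    rw [map_add]; exact norm_add_le _ _
  smul_eq' c x := by
    show ‖tupleMap a (c • x)‖ = |c| * ‖tupleMap a x‖
    rw [map_smul, norm_smul, Real.norm_eq_abs]
  eq_zero' x hx := tupleMap_injective h (by rw [map_zero]; exact norm_eq_zero.1 (by exact hx))

lemma tupleNorm_apply (a : Fin m → X) (h : LinearIndependent ℝ a) (v : Fin m → ℝ) :
    (tupleNorm a h).toFun v = ‖tupleMap a v‖ := rfl

/-- A uniform lower bound on `‖tupleMap a v‖` in terms of `‖v‖`. -/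
lemma tupleMap_lower {a : Fin m → X} (h : LinearIndependent ℝ a) :
    ∃ M : ℝ, 0 < M ∧ ∀ v, ‖v‖ ≤ M * ‖tupleMap a v‖ := by
  set e := LinearEquiv.ofInjective (tupleMap a) (tupleMap_injective h)
  set g := (e.symm.toLinearMap).toContinuousLinearMap
  refine ⟨‖g‖ + 1, by positivity, fun v => ?_⟩
  have h1 : v = g ⟨tupleMap a v, LinearMap.mem_range_self _ v⟩ := by
    show v = e.symm (e v)
    rw [e.symm_apply_apply]
  calc ‖v‖ = ‖g ⟨tupleMap a v, LinearMap.mem_range_self _ v⟩‖ := by rw [← h1]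
    _ ≤ ‖g‖ * ‖(⟨tupleMap a v, LinearMap.mem_range_self _ v⟩ : LinearMap.range (tupleMap a))‖ :=
        g.le_opNorm _
    _ = ‖g‖ * ‖tupleMap a v‖ := rfl
    _ ≤ (‖g‖ + 1) * ‖tupleMap a v‖ := by
        have := norm_nonneg (tupleMap a v)
        nlinarith [norm_nonneg g]

/-- The sup-norm as an `MNorm`. -/
def piMNorm (m : ℕ) : MNorm m where
  toFun x := ‖x‖
  add_le' x y := norm_add_le x y
  smul_eq' c x := by
    show ‖c • x‖ = |c| * ‖x‖
    rw [norm_smul, Real.norm_eq_abs]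
  eq_zero' x hx := norm_eq_zero.1 (by exact hx)

/-- The map from tuples of vectors to `𝔐_m`. -/
def Phi (m : ℕ) (X : Type u) [NormedAddCommGroup X] [NormedSpace ℝ X] (a : Fin m → X) :
    Mink m :=
  letI := Classical.dec (LinearIndependent ℝ a)
  if h : LinearIndependent ℝ a then Quotient.mk (mnormSetoid m) (tupleNorm a h)
  else Quotient.mk (mnormSetoid m) (piMNorm m)

lemma Phi_eq (m : ℕ) (a : Fin m → X) (h : LinearIndependent ℝ a) :
    Phi m X a = Quotient.mk (mnormSetoid m) (tupleNorm a h) := by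
  simp [Phi, h]; rfl

end Tuple
/-! ### Continuity of `Phi` -/

section Cont

variable {X : Type u} [NormedAddCommGroup X] [NormedSpace ℝ X] {m : ℕ}

lemma tupleMap_sub_le (a b : Fin m → X) (v : Fin m → ℝ) :
    ‖tupleMap b v - tupleMap a v‖ ≤ (m : ℝ) * ‖v‖ * ‖b - a‖ := by
  have h : tupleMap b v - tupleMap a v = ∑ i, v i • (b i - a i) := by
    rw [tupleMap_apply, tupleMap_apply, ← Finset.sum_sub_distrib]
    exact Finset.sum_congr rfl fun i _ => (smul_sub _ _ _).symm
  rw [h]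
  calc ‖∑ i, v i • (b i - a i)‖ ≤ ∑ i, ‖v i • (b i - a i)‖ := norm_sum_le _ _
    _ ≤ ∑ _i : Fin m, ‖v‖ * ‖b - a‖ := by
        refine Finset.sum_le_sum fun i _ => ?_
        rw [norm_smul]
        have h1 : ‖v i‖ ≤ ‖v‖ := norm_le_pi_norm v i
        have h2 : ‖b i - a i‖ ≤ ‖b - a‖ := by
          have := norm_le_pi_norm (b - a) i
          simpa using this
        exact mul_le_mul h1 h2 (norm_nonneg _) (norm_nonneg _)
    _ = (m : ℝ) * ‖v‖ * ‖b - a‖ := by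
        rw [Finset.sum_const, Finset.card_univ, Fintype.card_fin, nsmul_eq_mul]; ring

/-- Quantitative continuity for `mDist` of tuple norms. -/
lemma mDist_tupleNorm_lt {a : Fin m → X} (ha : LinearIndependent ℝ a) {E : ℝ} (hE : 1 < E) :
    ∃ r : ℝ, 0 < r ∧ ∀ b : Fin m → X, ∀ hb : LinearIndependent ℝ b, ‖b - a‖ < r →
      mDist m (tupleNorm a ha) (tupleNorm b hb) < E := by
  obtain ⟨M, hM, hMle⟩ := tupleMap_lower ha
  set C : ℝ := (m : ℝ) * M with hC
  have hC0 : 0 ≤ C := by positivity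
  set u₀ : ℝ := (E - 1) / (E + 1) with hu₀
  have hu₀pos : 0 < u₀ := by
    apply div_pos <;> linarith
  have hu₀lt : u₀ < 1 := by
    rw [hu₀, div_lt_one (by linarith)]; linarith
  refine ⟨u₀ / (C + 1), by positivity, fun b hb hba => ?_⟩
  set t : ℝ := C * ‖b - a‖ with ht
  have ht0 : 0 ≤ t := by positivity
  have htu : t < u₀ := by
    have h1 : C * ‖b - a‖ ≤ C * (u₀ / (C + 1)) :=
      mul_le_mul_of_nonneg_left (le_of_lt hba) hC0
    have hfrac : C / (C + 1) < 1 := by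
      rw [div_lt_one (by linarith)]; linarith
    have h2 : C * (u₀ / (C + 1)) < u₀ := by
      calc C * (u₀ / (C + 1)) = u₀ * (C / (C + 1)) := by ring
        _ < u₀ * 1 := mul_lt_mul_of_pos_left hfrac hu₀pos
        _ = u₀ := mul_one _
    calc t = C * ‖b - a‖ := ht
      _ ≤ C * (u₀ / (C + 1)) := h1
      _ < u₀ := h2
  have ht1 : t < 1 := lt_trans htu hu₀lt
  -- pointwise bounds
  have key : ∀ v, |(tupleNorm b hb).toFun v - (tupleNorm a ha).toFun v|
      ≤ t * (tupleNorm a ha).toFun v := by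
    intro v
    have h1 : ‖tupleMap b v - tupleMap a v‖ ≤ (m : ℝ) * ‖v‖ * ‖b - a‖ := tupleMap_sub_le a b v
    have h2 : ‖v‖ ≤ M * ‖tupleMap a v‖ := hMle v
    have h3 : (m : ℝ) * ‖v‖ * ‖b - a‖ ≤ t * ‖tupleMap a v‖ := by
      calc (m : ℝ) * ‖v‖ * ‖b - a‖ = (m : ℝ) * ‖b - a‖ * ‖v‖ := by ring
        _ ≤ (m : ℝ) * ‖b - a‖ * (M * ‖tupleMap a v‖) :=
            mul_le_mul_of_nonneg_left h2 (by positivity)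
        _ = t * ‖tupleMap a v‖ := by rw [ht, hC]; ring
    rw [tupleNorm_apply, tupleNorm_apply]
    have h4 := abs_norm_sub_norm_le (tupleMap b v) (tupleMap a v)
    calc |‖tupleMap b v‖ - ‖tupleMap a v‖| ≤ ‖tupleMap b v - tupleMap a v‖ := h4
      _ ≤ (m : ℝ) * ‖v‖ * ‖b - a‖ := h1
      _ ≤ t * ‖tupleMap a v‖ := h3
  -- operator norm bounds with the identity map
  set idm : (Fin m → ℝ) ≃ₗ[ℝ] (Fin m → ℝ) := LinearEquiv.refl ℝ _ with hidm
  have hop1 : opC m (tupleNorm a ha) (tupleNorm b hb) idm.toLinearMap ≤ 1 + t := by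
    refine opC_le _ _ _ _ (by linarith) fun v => ?_
    have := key v
    have habs := abs_le.1 this
    have : (tupleNorm b hb).toFun (idm.toLinearMap v) = (tupleNorm b hb).toFun v := rfl
    rw [this]
    have hNa := (tupleNorm a ha).nonneg v
    nlinarith [habs.2]
  have h1t : (0:ℝ) < 1 - t := by linarith
  have hop2 : opC m (tupleNorm b hb) (tupleNorm a ha) idm.symm.toLinearMap ≤ (1 - t)⁻¹ := by
    refine opC_le _ _ _ _ (by positivity) fun v => ?_
    have hk := key v
    have habs := abs_le.1 hk
    have heq : (tupleNorm a ha).toFun (idm.symm.toLinearMap v) = (tupleNorm a ha).toFun v := rfl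
    rw [heq]
    have hNa := (tupleNorm a ha).nonneg v
    have h6 : (tupleNorm a ha).toFun v ≤ (tupleNorm b hb).toFun v / (1 - t) := by
      rw [le_div_iff₀ h1t]
      nlinarith [habs.1]
    calc (tupleNorm a ha).toFun v ≤ (tupleNorm b hb).toFun v / (1 - t) := h6
      _ = (1 - t)⁻¹ * (tupleNorm b hb).toFun v := by rw [inv_mul_eq_div]
  have hfinal : mDist m (tupleNorm a ha) (tupleNorm b hb) ≤ (1 + t) * (1 - t)⁻¹ := by
    refine le_trans (mDist_le m _ _ idm) ?_
    exact mul_le_mul hop1 hop2 (opC_nonneg _ _ _ _) (by linarith)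
  have hlt : (1 + t) * (1 - t)⁻¹ < E := by
    rw [mul_comm, inv_mul_eq_div, div_lt_iff₀ h1t]
    have := (lt_div_iff₀ (show (0:ℝ) < E + 1 by linarith)).1 htu
    nlinarith
  linarith

end Cont
open Topology

section ContPhi

variable {X : Type u} [NormedAddCommGroup X] [NormedSpace ℝ X] {m : ℕ}

lemma continuousOn_Phi (hm : 0 < m) :
    ContinuousOn (Phi m X) {a : Fin m → X | LinearIndependent ℝ a} := by
  intro a ha
  have haLI : LinearIndependent ℝ a := ha
  rw [ContinuousWithinAt]
  have hnhds : (𝓝 (Phi m X a) : Filter (Mink m)) =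
      ⨅ s ∈ {s | Phi m X a ∈ s ∧ s ∈ {s : Set (Mink m) | ∃ (P : Mink m) (ε : ℝ),
        0 < ε ∧ s = {Q | minkDist m P Q < ε}}}, Filter.principal s :=
    TopologicalSpace.nhds_generateFrom
  rw [hnhds, Filter.tendsto_iInf]
  rintro s
  rw [Filter.tendsto_iInf]
  rintro ⟨hmem, P, ε, hε, rfl⟩
  rw [Filter.tendsto_principal]
  -- `δ` is the room we have
  set δ := ε - minkDist m P (Phi m X a) with hδ
  have hδpos : 0 < δ := by
    simp only [Set.mem_setOf_eq] at hmem
    have : minkDist m P (Phi m X a) < ε := hmem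
    rw [hδ]; linarith
  obtain ⟨r, hr, hball⟩ := mDist_tupleNorm_lt haLI (show (1:ℝ) < Real.exp δ by
    calc (1:ℝ) = Real.exp 0 := Real.exp_zero.symm
      _ < Real.exp δ := Real.exp_lt_exp.2 hδpos)
  have hev1 : ∀ᶠ b in 𝓝[{a : Fin m → X | LinearIndependent ℝ a}] a, ‖b - a‖ < r := by
    apply Filter.Eventually.filter_mono nhdsWithin_le_nhds
    have : Metric.ball a r ∈ 𝓝 a := Metric.ball_mem_nhds a hr
    filter_upwards [this] with b hb
    rw [Metric.mem_ball, dist_eq_norm] at hb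
    exact hb
  have hev2 : ∀ᶠ b in 𝓝[{a : Fin m → X | LinearIndependent ℝ a}] a,
      b ∈ {a : Fin m → X | LinearIndependent ℝ a} := self_mem_nhdsWithin
  filter_upwards [hev1, hev2] with b hbr hbLI
  show minkDist m P (Phi m X b) < ε
  have hbLI' : LinearIndependent ℝ b := hbLI
  have hPhiDist : minkDist m (Phi m X a) (Phi m X b)
      = Real.log (mDist m (tupleNorm a haLI) (tupleNorm b hbLI')) :=
    minkDist_eq_log m _ _ _ _ (Phi_eq m a haLI).symm (Phi_eq m b hbLI').symm
  have hlt : minkDist m (Phi m X a) (Phi m X b) < δ := by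
    rw [hPhiDist]
    rw [Real.log_lt_iff_lt_exp (mDist_pos m hm _ _)]
    exact hball b hbLI' hbr
  have htri := minkDist_triangle m hm P (Phi m X a) (Phi m X b)
  simp only [Set.mem_setOf_eq] at hmem
  calc minkDist m P (Phi m X b) ≤ minkDist m P (Phi m X a) + minkDist m (Phi m X a) (Phi m X b) := htri
    _ < minkDist m P (Phi m X a) + δ := by linarith
    _ = ε := by rw [hδ]; ring

end ContPhi
/-! ### `HmSet` as the image of `Phi` -/

section Image

variable {X : Type u} [NormedAddCommGroup X] [NormedSpace ℝ X] [FiniteDimensional ℝ X] {m : ℕ}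

lemma Phi_mem_HmSet {a : Fin m → X} (ha : LinearIndependent ℝ a) :
    Phi m X a ∈ HmSet m X := by
  have hout : Quotient.mk (mnormSetoid m) (Quotient.out (Phi m X a)) = Phi m X a :=
    Quotient.out_eq _
  have hrel : (mnormSetoid m).r (Quotient.out (Phi m X a)) (tupleNorm a ha) :=
    Quotient.exact (by rw [hout, Phi_eq m a ha])
  obtain ⟨e, he⟩ := hrel
  refine ⟨tupleMap a ∘ₗ e.toLinearMap, ?_, fun v => ?_⟩
  · exact (tupleMap_injective ha).comp e.injective
  · show ‖tupleMap a (e v)‖ = _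
    rw [← tupleNorm_apply a ha, he]

/-- The "Stiefel-like" compact set of parametrizations. -/
def KSet (m : ℕ) (X : Type u) [NormedAddCommGroup X] [NormedSpace ℝ X]
    [FiniteDimensional ℝ X] : Set (Fin m → X) :=
  {a | Orthonormal ℝ (fun i => toEuclidean (a i))}

lemma KSet_subset_LI : KSet m X ⊆ {a : Fin m → X | LinearIndependent ℝ a} := by
  intro a ha
  have h1 : LinearIndependent ℝ (fun i => toEuclidean (a i)) := ha.linearIndependent
  have h2 := h1.map' (toEuclidean (E := X)).symm.toLinearEquiv.toLinearMap
    (LinearMap.ker_eq_bot.2 (toEuclidean (E := X)).symm.toLinearEquiv.injective)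
  have : (fun i => (toEuclidean (E := X)).symm.toLinearEquiv.toLinearMap
      ((fun i => toEuclidean (a i)) i)) = a := by
    funext i
    exact (toEuclidean (E := X)).symm_apply_apply (a i)
  rwa [← this]

lemma KSet_isCompact : IsCompact (KSet m X) := by
  have hclosed : IsClosed (KSet m X) := by
    have : KSet m X = ⋂ (i : Fin m) (j : Fin m),
        {a : Fin m → X | (inner ℝ (toEuclidean (a i)) (toEuclidean (a j)) : ℝ)
          = if i = j then 1 else 0} := by
      ext a
      simp only [KSet, Set.mem_setOf_eq, Set.mem_iInter]
      exact orthonormal_iff_ite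
    rw [this]
    refine isClosed_iInter fun i => isClosed_iInter fun j => ?_
    have hcont : Continuous (fun a : Fin m → X =>
        (inner ℝ (toEuclidean (a i)) (toEuclidean (a j)) : ℝ)) := by
      apply Continuous.inner
      · exact (toEuclidean (E := X)).continuous.comp (continuous_apply i)
      · exact (toEuclidean (E := X)).continuous.comp (continuous_apply j)
    exact isClosed_eq hcont continuous_const
  set R : ℝ := ‖((toEuclidean (E := X)).symm : EuclideanSpace ℝ (Fin (Module.finrank ℝ X)) →L[ℝ] X)‖
  have hsub : KSet m X ⊆ Metric.closedBall 0 R := by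
    intro a ha
    rw [Metric.mem_closedBall, dist_zero_right]
    refine (pi_norm_le_iff_of_nonneg (norm_nonneg _)).2 fun i => ?_
    have h1 : ‖toEuclidean (a i)‖ = 1 := ha.1 i
    set T : EuclideanSpace ℝ (Fin (Module.finrank ℝ X)) →L[ℝ] X :=
      (toEuclidean (E := X)).symm.toContinuousLinearMap with hT
    have hTx : ∀ x, T x = (toEuclidean (E := X)).symm x := fun x => rfl
    calc ‖a i‖ = ‖T (toEuclidean (a i))‖ := by
          rw [hTx, (toEuclidean (E := X)).symm_apply_apply]
      _ ≤ ‖T‖ * ‖toEuclidean (a i)‖ := T.le_opNorm _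
      _ = R := by rw [h1, mul_one]
  exact (isCompact_closedBall _ _).of_isClosed_subset hclosed hsub

lemma HmSet_subset_image : HmSet m X ⊆ Phi m X '' KSet m X := by
  rintro P ⟨f, hinj, hf⟩
  set n := Module.finrank ℝ X
  set e := (toEuclidean (E := X)).toLinearEquiv with he
  set S : Submodule ℝ (EuclideanSpace ℝ (Fin n)) := (LinearMap.range f).map e.toLinearMap with hS
  have hrangerank : Module.finrank ℝ (LinearMap.range f) = m := by
    rw [LinearMap.finrank_range_of_inj hinj]
    simp [Module.finrank_fin_fun]
  have hSrank : Module.finrank ℝ S = m := by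
    rw [hS, LinearEquiv.finrank_map_eq e]
    exact hrangerank
  -- an orthonormal basis of S
  set ob := stdOrthonormalBasis ℝ S
  set ob' := ob.reindex (finCongr hSrank)
  set c : Fin m → X := fun i => (toEuclidean (E := X)).symm ((ob' i : EuclideanSpace ℝ (Fin n)))
    with hc
  have hcK : c ∈ KSet m X := by
    show Orthonormal ℝ (fun i => toEuclidean (c i))
    have hcc : (fun i => toEuclidean (c i)) = fun i => ((ob' i : EuclideanSpace ℝ (Fin n))) := by
      funext i
      simp [hc]
    rw [hcc]
    exact ob'.orthonormal.comp_linearIsometry S.subtypeₗᵢ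
  have hcLI : LinearIndependent ℝ c := KSet_subset_LI hcK
  refine ⟨c, hcK, ?_⟩
  -- c i lies in range f
  have hci : ∀ i, c i ∈ LinearMap.range f := by
    intro i
    have hmem : ((ob' i : EuclideanSpace ℝ (Fin n)))
        ∈ Submodule.map (e.toLinearMap) (LinearMap.range f) := (ob' i).2
    obtain ⟨x, hx, hxe⟩ := Submodule.mem_map.1 hmem
    have : c i = x := by
      rw [hc]
      simp only
      rw [← hxe]
      exact (toEuclidean (E := X)).symm_apply_apply x
    rw [this]
    exact hx
  have hrange_le : LinearMap.range (tupleMap c) ≤ LinearMap.range f := by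
    rintro x ⟨v, rfl⟩
    rw [tupleMap_apply]
    exact Submodule.sum_mem _ fun i _ => Submodule.smul_mem _ _ (hci i)
  have hrangec : Module.finrank ℝ (LinearMap.range (tupleMap c)) = m := by
    rw [LinearMap.finrank_range_of_inj (tupleMap_injective hcLI)]
    simp [Module.finrank_fin_fun]
  have hrange_eq : LinearMap.range (tupleMap c) = LinearMap.range f :=
    Submodule.eq_of_le_of_finrank_le hrange_le (by rw [hrangec, hrangerank])
  -- build the comparison automorphism
  set g : (Fin m → ℝ) →ₗ[ℝ] (Fin m → ℝ) :=
    (LinearEquiv.ofInjective f hinj).symm.toLinearMap ∘ₗ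
      (tupleMap c).codRestrict (LinearMap.range f) (fun v => hrange_le ⟨v, rfl⟩) with hg
  have hfg : ∀ v, f (g v) = tupleMap c v := by
    intro v
    have : (LinearEquiv.ofInjective f hinj) (g v)
        = ⟨tupleMap c v, hrange_le ⟨v, rfl⟩⟩ := by
      rw [hg]
      simp only [LinearMap.coe_comp, Function.comp_apply, LinearEquiv.coe_coe]
      rw [LinearEquiv.apply_symm_apply]
      rfl
    have h2 := congrArg (Subtype.val) this
    rwa [LinearEquiv.ofInjective_apply] at h2
  have hginj : Function.Injective g := by
    intro v w hvw
    apply tupleMap_injective hcLI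
    rw [← hfg, ← hfg, hvw]
  have hgbij : Function.Bijective g :=
    ⟨hginj, LinearMap.injective_iff_surjective.1 hginj⟩
  set w := LinearEquiv.ofBijective g hgbij
  rw [Phi_eq m c hcLI, ← Quotient.out_eq P]
  apply Quotient.sound
  exact ⟨w, fun v => by
    show (Quotient.out P).toFun (g v) = ‖tupleMap c v‖
    rw [← hfg v, ← hf (g v)]⟩

end Image
/-! ### Path-connectedness of the set of linearly independent tuples -/

section PathConn

variable {E : Type u} [NormedAddCommGroup E] [NormedSpace ℝ E]

lemma span_range_ne_top [FiniteDimensional ℝ E] {k : ℕ} (a : Fin k → E)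
    (hk : k < Module.finrank ℝ E) : Submodule.span ℝ (Set.range a) ≠ ⊤ := by
  intro h
  have := finrank_le_of_span_eq_top h
  simp only [Fintype.card_fin] at this
  omega

lemma finrank_span_range_le {k : ℕ} (a : Fin k → E) :
    Module.finrank ℝ (Submodule.span ℝ (Set.range a)) ≤ k := by
  classical
  refine (finrank_span_le_card _).trans ?_
  have h := Fintype.card_range_le a
  rw [Set.toFinset_card]
  simpa using h

lemma exists_notMem_notMem (A B : Submodule ℝ E) (hA : A ≠ ⊤) (hB : B ≠ ⊤) :
    ∃ v : E, v ∉ A ∧ v ∉ B := by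
  by_contra hcon
  push_neg at hcon
  obtain ⟨x, hx⟩ : ∃ x, x ∉ A := by
    by_contra hx; push_neg at hx
    exact hA (Submodule.eq_top_iff'.2 hx)
  obtain ⟨y, hy⟩ : ∃ y, y ∉ B := by
    by_contra hy; push_neg at hy
    exact hB (Submodule.eq_top_iff'.2 hy)
  have hxB : x ∈ B := hcon x hx
  have hyA : y ∈ A := by
    by_contra hyA
    exact hy (hcon y hyA)
  by_cases hxy : x + y ∈ A
  · exact hx (by simpa using A.sub_mem hxy hyA)
  · exact hy (by simpa using B.sub_mem (hcon _ hxy) hxB)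

lemma joinedIn_snoc {k : ℕ} {c : Fin k → E} (hc : LinearIndependent ℝ c)
    {x y : E} (hxy : JoinedIn ((Submodule.span ℝ (Set.range c) : Set E))ᶜ x y) :
    JoinedIn {a : Fin (k + 1) → E | LinearIndependent ℝ a} (Fin.snoc c x) (Fin.snoc c y) := by
  obtain ⟨γ, hγ⟩ := hxy
  refine ⟨⟨⟨fun t => Fin.snoc c (γ t), ?_⟩, ?_, ?_⟩, fun t => ?_⟩
  · refine continuous_pi fun i => ?_
    refine Fin.lastCases ?_ (fun j => ?_) i
    · simpa [Fin.snoc_last] using γ.continuous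
    · simpa [Fin.snoc_castSucc] using continuous_const
  · simp
  · simp
  · have h := hγ t
    simp only [Set.mem_compl_iff, SetLike.mem_coe] at h
    exact linearIndependent_fin_snoc.2 ⟨hc, h⟩

/-- Codimension bound: the quotient by the span of `k` vectors has rank `> 1`
when `k + 2 ≤ finrank E`. -/
lemma one_lt_rank_quotient_span [FiniteDimensional ℝ E] {k : ℕ} (c : Fin k → E)
    (hk : k + 2 ≤ Module.finrank ℝ E) :
    1 < Module.rank ℝ (E ⧸ Submodule.span ℝ (Set.range c)) := by
  set U := Submodule.span ℝ (Set.range c)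
  have h1 : Module.finrank ℝ (E ⧸ U) + Module.finrank ℝ U = Module.finrank ℝ E :=
    Submodule.finrank_quotient_add_finrank U
  have h2 : Module.finrank ℝ U ≤ k := finrank_span_range_le c
  have h3 : 2 ≤ Module.finrank ℝ (E ⧸ U) := by omega
  have h4 : ((Module.finrank ℝ (E ⧸ U) : Cardinal)) = Module.rank ℝ (E ⧸ U) :=
    Module.finrank_eq_rank ℝ _
  rw [← h4]
  exact_mod_cast lt_of_lt_of_le one_lt_two (by exact_mod_cast h3)

end PathConn
lemma isPathConnected_LI :
    ∀ (m : ℕ) (E : Type u) [NormedAddCommGroup E] [NormedSpace ℝ E] [FiniteDimensional ℝ E],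
      m < Module.finrank ℝ E → IsPathConnected {a : Fin m → E | LinearIndependent ℝ a} := by
  intro m
  induction m with
  | zero =>
    intro E _ _ _ _
    refine ⟨fun i => i.elim0, linearIndependent_empty_type, ?_⟩
    intro y hy
    have hy0 : y = fun i => i.elim0 := funext fun i => i.elim0
    rw [hy0]
    exact JoinedIn.refl linearIndependent_empty_type
  | succ k ih =>
    intro E _ _ _ hm
    have hm1 : k + 1 ≤ Module.finrank ℝ E := le_of_lt hm
    rw [isPathConnected_iff]
    constructor
    · refine ⟨fun i => Module.finBasis ℝ E (Fin.castLE hm1 i), ?_⟩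
      exact (Module.finBasis ℝ E).linearIndependent.comp _ (Fin.castLE_injective hm1)
    · rintro a ha b hb
      have haLI : LinearIndependent ℝ a := ha
      have hbLI : LinearIndependent ℝ b := hb
      obtain ⟨v, hvA, hvB⟩ := exists_notMem_notMem (Submodule.span ℝ (Set.range a))
        (Submodule.span ℝ (Set.range b)) (span_range_ne_top a hm) (span_range_ne_top b hm)
      have hv0 : v ≠ 0 := fun h => hvA (h ▸ Submodule.zero_mem _)
      have hA := linearIndependent_fin_succ'.1 haLI
      have hB := linearIndependent_fin_succ'.1 hbLI
      have hle_a : Submodule.span ℝ (Set.range (Fin.init a)) ≤ Submodule.span ℝ (Set.range a) :=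
        Submodule.span_mono (by
          rw [show Fin.init a = a ∘ Fin.castSucc from rfl]
          exact Set.range_comp_subset_range _ _)
      have hle_b : Submodule.span ℝ (Set.range (Fin.init b)) ≤ Submodule.span ℝ (Set.range b) :=
        Submodule.span_mono (by
          rw [show Fin.init b = b ∘ Fin.castSucc from rfl]
          exact Set.range_comp_subset_range _ _)
      have hva : v ∉ Submodule.span ℝ (Set.range (Fin.init a)) := fun h => hvA (hle_a h)
      have hvb : v ∉ Submodule.span ℝ (Set.range (Fin.init b)) := fun h => hvB (hle_b h)
      -- step 1 : join `a` with `snoc (init a) v`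
      have step1 : JoinedIn {c : Fin (k+1) → E | LinearIndependent ℝ c}
          a (Fin.snoc (Fin.init a) v) := by
        have hcodim := one_lt_rank_quotient_span (Fin.init a) (by omega)
        have hpc := isPathConnected_compl_of_one_lt_codim hcodim
        have hjoin := hpc.joinedIn (a (Fin.last k)) hA.2 v hva
        have h := joinedIn_snoc hA.1 hjoin
        rwa [Fin.snoc_init_self] at h
      have step3 : JoinedIn {c : Fin (k+1) → E | LinearIndependent ℝ c}
          b (Fin.snoc (Fin.init b) v) := by
        have hcodim := one_lt_rank_quotient_span (Fin.init b) (by omega)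
        have hpc := isPathConnected_compl_of_one_lt_codim hcodim
        have hjoin := hpc.joinedIn (b (Fin.last k)) hB.2 v hvb
        have h := joinedIn_snoc hB.1 hjoin
        rwa [Fin.snoc_init_self] at h
      -- the middle step
      obtain ⟨W, hW⟩ := Submodule.exists_isCompl (Submodule.span ℝ {v})
      have hrk1 : Module.finrank ℝ (Submodule.span ℝ {v}) = 1 := finrank_span_singleton hv0
      have hWrank : k < Module.finrank ℝ W := by
        have := Submodule.finrank_add_eq_of_isCompl hW
        omega
      set π := Submodule.linearProjOfIsCompl W (Submodule.span ℝ {v}) hW.symm with hπ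
      have hπv : π v = 0 := Submodule.projectionOnto_apply_of_mem_right hW.symm
        (Submodule.mem_span_singleton_self v)
      have hπW : ∀ w : W, π ↑w = w := fun w => Submodule.linearProjOfIsCompl_apply_left hW.symm w
      have hdiff : ∀ x : E, x - ↑(π x) ∈ Submodule.span ℝ {v} := by
        intro x
        have h0 : π (x - ↑(π x)) = 0 := by
          rw [map_sub, hπW (π x), sub_self]
        have hker : LinearMap.ker π = Submodule.span ℝ {v} :=
          Submodule.linearProjOfIsCompl_ker hW.symm
        rw [← hker]
        exact LinearMap.mem_ker.2 h0
      -- independence of projected initial segments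
      have hproj_indep : ∀ d : Fin k → E, LinearIndependent ℝ (Fin.snoc d v : Fin (k+1) → E) →
          LinearIndependent ℝ (fun j => π (d j)) := by
        intro d hd
        rw [Fintype.linearIndependent_iff]
        intro g hg
        have h1 : π (∑ j, g j • d j) = 0 := by
          rw [map_sum]
          simp_rw [map_smul]
          exact hg
        have h2 := hdiff (∑ j, g j • d j)
        rw [h1] at h2
        simp only [Submodule.coe_zero, sub_zero] at h2
        obtain ⟨μ, hμ⟩ := Submodule.mem_span_singleton.1 h2
        have hzero : ∑ i, (Fin.snoc g (-μ) : Fin (k+1) → ℝ) i • (Fin.snoc d v : Fin (k+1) → E) i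
            = 0 := by
          rw [Fin.sum_univ_castSucc]
          simp only [Fin.snoc_castSucc, Fin.snoc_last]
          rw [← hμ]
          simp [neg_smul]
        have hsnoc := Fintype.linearIndependent_iff.1 hd (Fin.snoc g (-μ)) hzero
        intro j
        have := hsnoc (Fin.castSucc j)
        rwa [Fin.snoc_castSucc] at this
      have hsnocA : LinearIndependent ℝ (Fin.snoc (Fin.init a) v : Fin (k+1) → E) :=
        linearIndependent_fin_snoc.2 ⟨hA.1, hva⟩
      have hsnocB : LinearIndependent ℝ (Fin.snoc (Fin.init b) v : Fin (k+1) → E) :=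
        linearIndependent_fin_snoc.2 ⟨hB.1, hvb⟩
      have hWa : LinearIndependent ℝ (fun j => π (Fin.init a j)) := hproj_indep _ hsnocA
      have hWb : LinearIndependent ℝ (fun j => π (Fin.init b j)) := hproj_indep _ hsnocB
      have ihW := ih W hWrank
      obtain ⟨p, hp⟩ := ihW.joinedIn (fun j => π (Fin.init a j)) hWa
        (fun j => π (Fin.init b j)) hWb
      choose α hα using fun j => Submodule.mem_span_singleton.1 (hdiff (Fin.init a j))
      choose β hβ using fun j => Submodule.mem_span_singleton.1 (hdiff (Fin.init b j))
      set sc : unitInterval → Fin k → ℝ :=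
        fun t j => (1 - (t : ℝ)) * α j + (t : ℝ) * β j with hsc
      set F : unitInterval → Fin (k+1) → E :=
        fun t => Fin.snoc (fun j => (↑(p t j) : E) + sc t j • v) v with hF
      have hFcont : Continuous F := by
        refine continuous_pi fun i => ?_
        refine Fin.lastCases ?_ (fun j => ?_) i
        · simpa [hF, Fin.snoc_last] using continuous_const
        · simp only [hF, Fin.snoc_castSucc]
          refine Continuous.add ?_ ?_
          · exact continuous_subtype_val.comp ((continuous_apply j).comp p.continuous)
          · refine Continuous.smul ?_ continuous_const
            exact ((continuous_const.sub continuous_subtype_val).mul continuous_const).add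
              (continuous_subtype_val.mul continuous_const)
      have hF0 : F 0 = Fin.snoc (Fin.init a) v := by
        funext i
        refine Fin.lastCases ?_ (fun j => ?_) i
        · simp [hF]
        · simp only [hF, Fin.snoc_castSucc]
          have hp0 : p 0 = fun j => π (Fin.init a j) := p.source
          rw [hp0]
          have hsc0 : sc 0 j = α j := by
            simp [hsc]
          rw [hsc0, hα j]
          abel
      have hF1 : F 1 = Fin.snoc (Fin.init b) v := by
        funext i
        refine Fin.lastCases ?_ (fun j => ?_) i
        · simp [hF]
        · simp only [hF, Fin.snoc_castSucc]
          have hp1 : p 1 = fun j => π (Fin.init b j) := p.target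
          rw [hp1]
          have hsc1 : sc 1 j = β j := by
            simp [hsc]
          rw [hsc1, hβ j]
          abel
      have hFmem : ∀ t, F t ∈ {c : Fin (k+1) → E | LinearIndependent ℝ c} := by
        intro t
        show LinearIndependent ℝ (F t)
        rw [Fintype.linearIndependent_iff]
        intro g hg
        have hπsum : ∑ j : Fin k, g (Fin.castSucc j) • p t j = 0 := by
          have h2 : π (∑ i, g i • F t i) = 0 := by rw [hg]; exact map_zero π
          rw [Fin.sum_univ_castSucc] at h2
          simp only [hF, Fin.snoc_castSucc, Fin.snoc_last] at h2
          rw [map_add, map_sum] at h2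
          simp only [map_smul, map_add, hπv, smul_zero, add_zero] at h2
          simp only [hπW] at h2
          exact h2
        have hgj : ∀ j : Fin k, g (Fin.castSucc j) = 0 :=
          fun j => Fintype.linearIndependent_iff.1 (hp t) _ hπsum j
        have hglast : g (Fin.last k) = 0 := by
          have h4 := hg
          rw [Fin.sum_univ_castSucc] at h4
          simp only [hF, Fin.snoc_castSucc, Fin.snoc_last] at h4
          have hz : (∑ j : Fin k, g (Fin.castSucc j)
              • ((↑(p t j) : E) + sc t j • v)) = 0 := by
            apply Finset.sum_eq_zero
            intro j _
            rw [hgj j, zero_smul]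
          rw [hz, zero_add] at h4
          rcases smul_eq_zero.1 h4 with h | h
          · exact h
          · exact absurd h hv0
        intro i
        exact Fin.lastCases hglast hgj i
      have step2 : JoinedIn {c : Fin (k+1) → E | LinearIndependent ℝ c}
          (Fin.snoc (Fin.init a) v) (Fin.snoc (Fin.init b) v) :=
        ⟨⟨⟨F, hFcont⟩, hF0, hF1⟩, hFmem⟩
      exact (step1.trans step2).trans step3.symm
/-! ### The case `m = 0` -/

lemma MNorm.eq_of_zero (N N' : MNorm 0) : N = N' := by
  have h : N.toFun = N'.toFun := by
    funext x
    have hx : x = 0 := Subsingleton.elim _ _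
    rw [hx, MNorm.zero, MNorm.zero]
  cases N; cases N'
  simpa using h

lemma Mink.zero_subsingleton (P Q : Mink 0) : P = Q := by
  rw [← Quotient.out_eq P, ← Quotient.out_eq Q,
    MNorm.eq_of_zero (Quotient.out P) (Quotient.out Q)]

lemma HmSet_zero_mem (X : Type u) [NormedAddCommGroup X] [NormedSpace ℝ X] (P : Mink 0) :
    P ∈ HmSet 0 X := by
  refine ⟨0, fun x y _ => Subsingleton.elim x y, fun v => ?_⟩
  have hv : v = 0 := Subsingleton.elim _ _
  rw [hv, MNorm.zero]
  simp
/-- For a finite-dimensional real Banach space `X` and `m < dim X`,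
the set `H_m(X)` of isometry classes of `m`-dimensional subspaces of `X`, with the
Banach–Mazur metric topology, is a compact and connected (metric) space. -/
theorem HmSet_isCompact_isConnected
    (X : Type u) [NormedAddCommGroup X] [NormedSpace ℝ X] [FiniteDimensional ℝ X]
    (m : ℕ) (hm : m < Module.finrank ℝ X) :
    IsCompact (HmSet m X) ∧ IsConnected (HmSet m X) := by
  rcases Nat.eq_zero_or_pos m with rfl | hpos
  · have : Subsingleton (Mink 0) := ⟨Mink.zero_subsingleton⟩
    have hsub : (HmSet 0 X).Subsingleton := Set.subsingleton_of_subsingleton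
    refine ⟨hsub.finite.isCompact, ⟨⟨_, HmSet_zero_mem X (Quotient.mk (mnormSetoid 0) (piMNorm 0))⟩,
      hsub.isPreconnected⟩⟩
  · have himage1 : HmSet m X = Phi m X '' KSet m X := by
      refine Set.Subset.antisymm HmSet_subset_image ?_
      rintro _ ⟨a, haK, rfl⟩
      exact Phi_mem_HmSet (KSet_subset_LI haK)
    have himage2 : HmSet m X = Phi m X '' {a : Fin m → X | LinearIndependent ℝ a} := by
      refine Set.Subset.antisymm ?_ ?_
      · rw [himage1]
        exact Set.image_mono KSet_subset_LI
      · rintro _ ⟨a, haLI, rfl⟩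
        exact Phi_mem_HmSet haLI
    constructor
    · rw [himage1]
      exact KSet_isCompact.image_of_continuousOn ((continuousOn_Phi hpos).mono KSet_subset_LI)
    · rw [himage2]
      exact ((isPathConnected_LI m X hm).isConnected).image _ (continuousOn_Phi hpos)
end
end
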